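/- arXiv:2411.00721 — 12 statements merged into one kernel-verified Lean document; each statement's English description precedes it below -/
import Mathlib

section
/- Let f : F_2^k → F_2 be a Boolean function, let s ≥ 2 be an integer, and define f_s : F_2^{(k-1)s+1} → F_2 by f_s(x_1, …, x_{(k-1)s+1}) = f(x_1, x_{s+1}, x_{2s+1}, …, x_{(k-1)s+1}). If f is a (k, n)-lifting for all n ≥ k, then f_s is a ((k-1)s+1, n)-lifting for all n ≥ (k-1)s+1. -/
/-- The shift-invariant map `F : F_2^n → F_2^n` induced by a local rule
`f : F_2^k → F_2`, namely `F(x)_i = f(x_i, x_{i+1}, …, x_{i+k-1})`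
with indices taken modulo `n`. -/
def induced (k n : ℕ) (f : (Fin k → ZMod 2) → ZMod 2) :
    (ZMod n → ZMod 2) → ZMod n → ZMod 2 :=
  fun x i => f fun j => x (i + ((j : ℕ) : ZMod n))

/-- The shift-invariant map induced by `f : F_2^k → F_2` with anchor shifted by `j0`
(0-based), namely `F(x)_i = f(x_{i-j0}, x_{i-j0+1}, …, x_{i-j0+k-1})`, indices mod `n`.
For a 1-based special index `j` this is `F(x)_i = f(x_{i-j+1}, …, x_{i-j+k})`
with `j0 = j - 1`. -/
def inducedShift (k n : ℕ) (j0 : ℕ) (f : (Fin k → ZMod 2) → ZMod 2) :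
    (ZMod n → ZMod 2) → ZMod n → ZMod 2 :=
  fun x i => f fun m => x (i - (j0 : ZMod n) + ((m : ℕ) : ZMod n))

/-- A Boolean function `g` depends on the coordinate `i` if there are two inputs
differing only in coordinate `i` on which `g` takes different values. -/
def BoolDependsOn {k : ℕ} (g : (Fin k → ZMod 2) → ZMod 2) (i : Fin k) : Prop :=
  ∃ x y : Fin k → ZMod 2, (∀ j, j ≠ i → x j = y j) ∧ g x ≠ g y

/-- The cyclic right shift on `F_2^n`. -/
def shiftR (n : ℕ) : (ZMod n → ZMod 2) → ZMod n → ZMod 2 :=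
  fun x i => x (i - 1)

private lemma helper_modeq (s n : ℕ) (hs : 0 < s) {a b : ℕ}
    (ha : a < n / Nat.gcd s n) (hb : b < n / Nat.gcd s n)
    (h : a * s ≡ b * s [MOD n]) : a = b := by
  have hdpos : 0 < Nat.gcd s n := Nat.gcd_pos_of_pos_left n hs
  have hdn : Nat.gcd s n ∣ n := Nat.gcd_dvd_right s n
  have hds : Nat.gcd s n ∣ s := Nat.gcd_dvd_left s n
  set d := Nat.gcd s n with hd
  set m := n / d with hm
  have hmd : m * d = n := Nat.div_mul_cancel hdn
  have hcop : Nat.Coprime (s / d) m := Nat.coprime_div_gcd_div_gcd hdpos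
  have key : ∀ a b : ℕ, a ≤ b → a < m → b < m → a * s ≡ b * s [MOD n] → a = b := by
    intro a b hab ha hb h
    have hdvd : n ∣ b * s - a * s :=
      (Nat.modEq_iff_dvd' (Nat.mul_le_mul_right s hab)).mp h
    rw [← Nat.sub_mul] at hdvd
    have hsd : s / d * d = s := Nat.div_mul_cancel hds
    have h1 : m * d ∣ (b - a) * (s / d) * d := by
      rw [mul_assoc, hsd, hmd]; exact hdvd
    have h2 : m ∣ (b - a) * (s / d) := (Nat.mul_dvd_mul_iff_right hdpos).mp h1
    have h3 : m ∣ b - a := (Nat.Coprime.symm hcop).dvd_of_dvd_mul_right h2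
    have h4 : b - a = 0 := Nat.eq_zero_of_dvd_of_lt h3 (by omega)
    omega
  rcases le_total a b with hab | hab
  · exact key a b hab ha hb h
  · exact (key b a hab hb ha h.symm).symm

private lemma cast_mod_mul (s n q : ℕ) (hs : 0 < s) :
    ((q % (n / Nat.gcd s n) : ℕ) : ZMod n) * (s : ZMod n) = (q : ZMod n) * s := by
  have hdn : Nat.gcd s n ∣ n := Nat.gcd_dvd_right s n
  have hds : Nat.gcd s n ∣ s := Nat.gcd_dvd_left s n
  set d := Nat.gcd s n with hd
  set m := n / d with hm
  have hms : (m : ZMod n) * (s : ZMod n) = 0 := by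
    have h1 : m * s = n * (s / d) := by
      calc m * s = m * (d * (s / d)) := by rw [Nat.mul_div_cancel' hds]
        _ = m * d * (s / d) := by ring
        _ = n * (s / d) := by rw [Nat.div_mul_cancel hdn]
    have : ((m * s : ℕ) : ZMod n) = ((n * (s / d) : ℕ) : ZMod n) := by rw [h1]
    push_cast at this
    rwa [ZMod.natCast_self, zero_mul] at this
  have hq : q * s = q % m * s + q / m * (m * s) := by
    conv_lhs => rw [← Nat.mod_add_div q m]
    ring
  have := congrArg (fun t : ℕ => (t : ZMod n)) hq
  push_cast at this
  rw [this, hms, mul_zero, add_zero]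

/-- if `f : F_2^k → F_2` is a `(k,n)`-lifting for all `n ≥ k` and `s ≥ 2`,
then `f_s(x_1, …, x_{(k-1)s+1}) = f(x_1, x_{s+1}, …, x_{(k-1)s+1})`
is a `((k-1)s+1, n)`-lifting for all `n ≥ (k-1)s+1`. -/
theorem stmt0 (k s : ℕ) (hs : 2 ≤ s) (f : (Fin k → ZMod 2) → ZMod 2)
    (hf : ∀ n, k ≤ n → Function.Bijective (induced k n f)) :
    ∀ n, (k - 1) * s + 1 ≤ n →
      Function.Bijective (induced ((k - 1) * s + 1) n
        (fun y => f fun j => y ⟨(j : ℕ) * s, by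
          have hj := j.isLt
          have h2 : (j : ℕ) * s ≤ (k - 1) * s :=
            Nat.mul_le_mul (by omega) (le_refl s)
          omega⟩)) := by
  intro n hn
  have hs0 : 0 < s := by omega
  have hn0 : 0 < n := by omega
  haveI : NeZero n := ⟨by omega⟩
  have hdpos : 0 < Nat.gcd s n := Nat.gcd_pos_of_pos_left n hs0
  have hdn : Nat.gcd s n ∣ n := Nat.gcd_dvd_right s n
  have hds : Nat.gcd s n ∣ s := Nat.gcd_dvd_left s n
  set d := Nat.gcd s n with hd
  set m := n / d with hm
  have hmd : m * d = n := Nat.div_mul_cancel hdn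
  have hm0 : 0 < m := Nat.div_pos (Nat.le_of_dvd hn0 hdn) hdpos
  haveI : NeZero m := ⟨by omega⟩
  have hkm : k ≤ m := by
    rcases Nat.eq_zero_or_pos k with rfl | hk
    · exact Nat.zero_le m
    by_contra hcon
    push_neg at hcon
    have hds' : d ≤ s := Nat.le_of_dvd hs0 hds
    have h1 : n ≤ (k - 1) * s := by
      calc n = m * d := hmd.symm
        _ ≤ (k - 1) * d := Nat.mul_le_mul_right d (by omega)
        _ ≤ (k - 1) * s := Nat.mul_le_mul_left _ hds'
    omega
  set φ : Fin d × ZMod m → ZMod n :=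
    fun p => (((p.1 : ℕ) + p.2.val * s : ℕ) : ZMod n) with hφ
  -- φ is injective
  have hφinj : Function.Injective φ := by
    rintro ⟨r, t⟩ ⟨r', t'⟩ h
    simp only [hφ] at h
    have hr : r = r' := by
      have h2 := congrArg (ZMod.castHom hdn (ZMod d)) h
      rw [map_natCast, map_natCast] at h2
      have hsz : (s : ZMod d) = 0 := (ZMod.natCast_eq_zero_iff s d).mpr hds
      push_cast at h2
      rw [hsz, mul_zero, add_zero, mul_zero, add_zero] at h2
      have h3 := congrArg ZMod.val h2
      rw [ZMod.val_cast_of_lt r.isLt, ZMod.val_cast_of_lt r'.isLt] at h3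
      exact Fin.ext h3
    subst hr
    have h4 : (r : ℕ) + t.val * s ≡ (r : ℕ) + t'.val * s [MOD n] :=
      (ZMod.natCast_eq_natCast_iff _ _ _).mp h
    have h5 : t.val * s ≡ t'.val * s [MOD n] := Nat.ModEq.add_left_cancel' _ h4
    have h6 : t.val = t'.val := helper_modeq s n hs0 (ZMod.val_lt t) (ZMod.val_lt t') h5
    exact Prod.ext rfl (ZMod.val_injective m h6)
  have hφbij : Function.Bijective φ := by
    rw [Fintype.bijective_iff_injective_and_card]
    refine ⟨hφinj, ?_⟩
    rw [Fintype.card_prod, Fintype.card_fin, ZMod.card, ZMod.card, Nat.mul_comm]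
    exact hmd
  -- key shift property of φ
  have hφadd : ∀ (r : Fin d) (t : ZMod m) (a : ℕ),
      φ (r, t + (a : ZMod m)) = φ (r, t) + ((a * s : ℕ) : ZMod n) := by
    intro r t a
    simp only [hφ]
    have h0 : t + (a : ZMod m) = ((t.val + a : ℕ) : ZMod m) := by
      push_cast
      rw [ZMod.natCast_val, ZMod.cast_id]
    have hval : (t + (a : ZMod m)).val = (t.val + a) % m := by
      rw [h0, ZMod.val_natCast]
    rw [hval]
    push_cast
    rw [cast_mod_mul s n (t.val + a) hs0]
    push_cast
    ring
  -- the main conjugation identity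
  have hmain : ∀ (x : ZMod n → ZMod 2) (r : Fin d) (t : ZMod m),
      induced ((k - 1) * s + 1) n
        (fun y => f fun j => y ⟨(j : ℕ) * s, by
          have hj := j.isLt
          have h2 : (j : ℕ) * s ≤ (k - 1) * s :=
            Nat.mul_le_mul (by omega) (le_refl s)
          omega⟩) x (φ (r, t))
        = induced k m f (fun u => x (φ (r, u))) t := by
    intro x r t
    simp only [induced]
    congr 1
    funext j
    rw [hφadd r t (j : ℕ)]
  constructor
  · intro x x' hxx
    have hy : ∀ r : Fin d, (fun u => x (φ (r, u))) = (fun u => x' (φ (r, u))) := by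
      intro r
      apply (hf m hkm).injective
      funext t
      rw [← hmain x r t, ← hmain x' r t, hxx]
    funext i
    obtain ⟨⟨r, t⟩, hrt⟩ := hφbij.surjective i
    rw [← hrt]
    exact congrFun (hy r) t
  · intro z
    choose y hy using fun r : Fin d => (hf m hkm).surjective (fun u => z (φ (r, u)))
    set E : Fin d × ZMod m ≃ ZMod n := Equiv.ofBijective φ hφbij with hE
    refine ⟨fun i => y (E.symm i).1 (E.symm i).2, ?_⟩
    have hx : ∀ r u, (fun i => y (E.symm i).1 (E.symm i).2) (φ (r, u)) = y r u := by
      intro r u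
      have hsymm : E.symm (φ (r, u)) = (r, u) := E.symm_apply_apply (r, u)
      simp only [hsymm]
    funext i
    obtain ⟨⟨r, t⟩, hrt⟩ := hφbij.surjective i
    rw [← hrt, hmain]
    have hxy : (fun u => (fun i => y (E.symm i).1 (E.symm i).2) (φ (r, u))) = y r :=
      funext fun u => hx r u
    rw [hxy, hy r]
end

section
/- Let f : F_2^k → F_2 be a Boolean function of diameter k, and suppose there exists j with 1 ≤ j ≤ k such that the function g(x_1, …, x_k) := f(x_1, …, x_k) ⊕ x_j does not depend on x_j. Suppose furthermore that for each integer t with 1−j ≤ t ≤ k−j such that g depends on x_{j+t}, the product g(x_1, …, x_k) · g(x_{1+t}, …, x_{k+t}) is identically 0 as a function of the variables it involves. Then f is a (k, n)-lifting for each n ≥ k. -/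
lemma not_dependsOn_ext {k : ℕ} (g : (Fin k → ZMod 2) → ZMod 2) (i : Fin k)
    (h : ¬ BoolDependsOn g i) :
    ∀ u v : Fin k → ZMod 2, (∀ m, m ≠ i → u m = v m) → g u = g v := by
  intro u v huv
  by_contra hne
  exact h ⟨u, v, huv, hne⟩

lemma indep_flip_aux {k : ℕ} (g : (Fin k → ZMod 2) → ZMod 2) (s : Finset (Fin k)) :
    ∀ u v : Fin k → ZMod 2, (∀ m, u m ≠ v m → m ∈ s) →
      (∀ m, BoolDependsOn g m → u m = v m) → g u = g v := by
  induction s using Finset.induction_on with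
  | empty =>
    intro u v hs _
    have : u = v := funext fun m => by_contra fun h => absurd (hs m h) (Finset.notMem_empty m)
    rw [this]
  | @insert a s _ ih =>
    intro u v hs hd
    by_cases hav : u a = v a
    · refine ih u v (fun m hm => ?_) hd
      rcases Finset.mem_insert.mp (hs m hm) with h | h
      · exact absurd hav (h ▸ hm)
      · exact h
    · have hna : ¬ BoolDependsOn g a := fun h => hav (hd a h)
      have h1 : g u = g (Function.update u a (v a)) :=
        not_dependsOn_ext g a hna _ _ (fun m hm => (Function.update_of_ne hm _ _).symm)
      rw [h1]
      refine ih _ v (fun m hm => ?_) (fun m hdm => ?_)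
      · by_cases hma : m = a
        · subst hma; simp at hm
        · rw [Function.update_of_ne hma] at hm
          rcases Finset.mem_insert.mp (hs m hm) with h | h
          · exact absurd h hma
          · exact h
      · by_cases hma : m = a
        · subst hma; simp
        · rw [Function.update_of_ne hma]; exact hd m hdm

lemma indep_flip {k : ℕ} (g : (Fin k → ZMod 2) → ZMod 2) (u v : Fin k → ZMod 2)
    (h : ∀ m, BoolDependsOn g m → u m = v m) : g u = g v :=
  indep_flip_aux g Finset.univ u v (fun m _ => Finset.mem_univ m) h

def Gf {k : ℕ} (f : (Fin k → ZMod 2) → ZMod 2) (j : Fin k) (n : ℕ)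
    (x : ZMod n → ZMod 2) (a : ZMod n) : ZMod 2 :=
  f (fun m => x (a + ((m : ℕ) : ZMod n))) + x (a + ((j : ℕ) : ZMod n))

def Phi {k : ℕ} (f : (Fin k → ZMod 2) → ZMod 2) (j : Fin k) (n : ℕ)
    (x : ZMod n → ZMod 2) (i : ZMod n) : ZMod 2 :=
  x i + Gf f j n x (i - ((j : ℕ) : ZMod n))

/-- Let `f : F_2^k → F_2` have diameter `k` (it depends on its first and
last variables). Suppose for some coordinate `j` (0-based here; the 1-based `j` of the
paper is `j+1`) the function `g(x) := f(x) ⊕ x_j` does not depend on `x_j`, and for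
every coordinate `c` on which `g` depends (`c = j + t`, i.e. `t = c - j` ranges over the
offsets `1-j ≤ t ≤ k-j` in the 1-based formulation), the product
`g(x_1,…,x_k) · g(x_{1+t},…,x_{k+t})` is identically `0` as a function of a bi-infinite
assignment of the variables. Then `f` is a `(k,n)`-lifting for every `n ≥ k`. -/
theorem stmt1 (k : ℕ) (hk : 0 < k) (f : (Fin k → ZMod 2) → ZMod 2)
    (hdiam : BoolDependsOn f ⟨0, hk⟩ ∧ BoolDependsOn f ⟨k - 1, by omega⟩)
    (j : Fin k)
    (hindep : ¬ BoolDependsOn (fun x => f x + x j) j)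
    (hprod : ∀ c : Fin k, BoolDependsOn (fun x => f x + x j) c →
      ∀ x : ℤ → ZMod 2,
        (f (fun m => x ((m : ℕ) : ℤ)) + x ((j : ℕ) : ℤ)) *
          (f (fun m => x (((m : ℕ) : ℤ) + (((c : ℕ) : ℤ) - ((j : ℕ) : ℤ)))) +
            x (((j : ℕ) : ℤ) + (((c : ℕ) : ℤ) - ((j : ℕ) : ℤ)))) = 0) :
    ∀ n, k ≤ n → Function.Bijective (induced k n f) := by
  intro n _
  classical
  set g : (Fin k → ZMod 2) → ZMod 2 := fun x => f x + x j with hgdef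
  have two : ∀ t : ZMod 2, t + t = 0 := by decide
  have zoo : ∀ t : ZMod 2, t = 0 ∨ t = 1 := by decide
  have hG : ∀ (x : ZMod n → ZMod 2) (a : ZMod n),
      Gf f j n x a = g (fun m => x (a + ((m : ℕ) : ZMod n))) := fun x a => rfl
  -- product condition over ZMod n
  have key : ∀ (c : Fin k), BoolDependsOn g c → ∀ (x : ZMod n → ZMod 2) (a : ZMod n),
      Gf f j n x a * Gf f j n x (a + ((c : ℕ) : ZMod n) - ((j : ℕ) : ZMod n)) = 0 := by
    intro c hc x a
    have h := hprod c hc (fun t : ℤ => x (a + (t : ZMod n)))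
    have e1 : Gf f j n x a
        = f (fun m => x (a + ((((m : ℕ) : ℤ)) : ZMod n))) + x (a + ((((j : ℕ) : ℤ)) : ZMod n)) := by
      unfold Gf
      congr 1
      · congr 1; funext m; congr 1; push_cast; ring
      · congr 1; push_cast; ring
    have e2 : Gf f j n x (a + ((c : ℕ) : ZMod n) - ((j : ℕ) : ZMod n))
        = f (fun m => x (a + (((((m : ℕ) : ℤ) + (((c : ℕ) : ℤ) - ((j : ℕ) : ℤ))) : ℤ) : ZMod n)))
          + x (a + (((((j : ℕ) : ℤ) + (((c : ℕ) : ℤ) - ((j : ℕ) : ℤ))) : ℤ) : ZMod n)) := by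
      unfold Gf
      congr 1
      · congr 1; funext m; congr 1; push_cast; ring
      · congr 1; push_cast; ring
    rw [e1, e2]
    exact h
  -- Lemma A
  have lemA : ∀ (x : ZMod n → ZMod 2) (a : ZMod n),
      Gf f j n x a = 1 → Gf f j n (Phi f j n x) a = 1 := by
    intro x a hxa
    have heq : Gf f j n (Phi f j n x) a = Gf f j n x a := by
      rw [hG, hG]
      refine indep_flip g _ _ (fun m hdm => ?_)
      have h0 : Gf f j n x (a + ((m : ℕ) : ZMod n) - ((j : ℕ) : ZMod n)) = 0 := by
        have hk0 := key m hdm x a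
        rwa [hxa, one_mul] at hk0
      show Phi f j n x (a + ((m : ℕ) : ZMod n)) = x (a + ((m : ℕ) : ZMod n))
      rw [Phi, h0, add_zero]
    rw [heq, hxa]
  -- main equality
  have lemB : ∀ (x : ZMod n → ZMod 2) (a : ZMod n),
      Gf f j n (Phi f j n x) a = Gf f j n x a := by
    intro x a
    rcases zoo (Gf f j n x a) with h0 | h1
    · by_cases hex : ∃ c, BoolDependsOn g c ∧
          Gf f j n x (a + ((c : ℕ) : ZMod n) - ((j : ℕ) : ZMod n)) = 1
      · obtain ⟨c, hc, h1c⟩ := hex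
        have hyc := lemA x _ h1c
        have hk0 := key c hc (Phi f j n x) a
        rw [hyc, mul_one] at hk0
        rw [hk0, h0]
      · push_neg at hex
        rw [hG, hG]
        refine indep_flip g _ _ (fun m hdm => ?_)
        have h0m : Gf f j n x (a + ((m : ℕ) : ZMod n) - ((j : ℕ) : ZMod n)) = 0 := by
          rcases zoo (Gf f j n x (a + ((m : ℕ) : ZMod n) - ((j : ℕ) : ZMod n))) with h | h
          · exact h
          · exact absurd h (hex m hdm)
        show Phi f j n x (a + ((m : ℕ) : ZMod n)) = x (a + ((m : ℕ) : ZMod n))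
        rw [Phi, h0m, add_zero]
    · rw [lemA x a h1, h1]
  -- involution
  have hinv : ∀ x, Phi f j n (Phi f j n x) = x := by
    intro x
    funext i
    show Phi f j n x i + Gf f j n (Phi f j n x) (i - ((j : ℕ) : ZMod n)) = x i
    rw [lemB]
    show x i + Gf f j n x (i - ((j : ℕ) : ZMod n))
        + Gf f j n x (i - ((j : ℕ) : ZMod n)) = x i
    rw [add_assoc, two, add_zero]
  have hPhi : Function.Bijective (Phi f j n) :=
    Function.bijective_iff_has_inverse.mpr ⟨Phi f j n, fun x => hinv x, fun x => hinv x⟩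
  have hS : Function.Bijective
      (fun (y : ZMod n → ZMod 2) (i : ZMod n) => y (i + ((j : ℕ) : ZMod n))) := by
    refine Function.bijective_iff_has_inverse.mpr
      ⟨fun y i => y (i - ((j : ℕ) : ZMod n)), fun y => funext fun i => ?_,
        fun y => funext fun i => ?_⟩
    · show y (i - ((j : ℕ) : ZMod n) + ((j : ℕ) : ZMod n)) = y i
      congr 1; ring
    · show y (i + ((j : ℕ) : ZMod n) - ((j : ℕ) : ZMod n)) = y i
      congr 1; ring
  have hrel : induced k n f
      = (fun (y : ZMod n → ZMod 2) (i : ZMod n) => y (i + ((j : ℕ) : ZMod n))) ∘ Phi f j n := by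
    funext x i
    show f (fun m => x (i + ((m : ℕ) : ZMod n))) = Phi f j n x (i + ((j : ℕ) : ZMod n))
    rw [Phi]
    have e : i + ((j : ℕ) : ZMod n) - ((j : ℕ) : ZMod n) = i := by ring
    rw [e, Gf]
    generalize f (fun m => x (i + ((m : ℕ) : ZMod n))) = F
    generalize x (i + ((j : ℕ) : ZMod n)) = X
    rw [show X + (F + X) = F + (X + X) by ring, two, add_zero]
  rw [hrel]
  exact hS.comp hPhi
end

section
/- If f : F_2^{k_f} → F_2 and g : F_2^{k_g} → F_2 are proper liftings, then their composition g ∘ f, defined by (g ∘ f)(x) = g(f(x_1, …, x_{k_f}), f(x_2, …, x_{k_f+1}), …, f(x_{k_g}, …, x_{k_f+k_g−1})) (with variable indices shifted so that x_1 is the first variable on which it depends), is also a proper lifting. -/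
/-- if `f : F_2^{k_f} → F_2` and `g : F_2^{k_g} → F_2` are proper liftings,
then the composed local rule
`(g ∘ f)(x) = g(f(x_1,…,x_{k_f}), f(x_2,…,x_{k_f+1}), …, f(x_{k_g},…,x_{k_f+k_g-1}))`,
a Boolean function on `k_f + k_g - 1` bits, is also a proper lifting. -/
theorem stmt5 (kf kg : ℕ)
    (f : (Fin kf → ZMod 2) → ZMod 2) (g : (Fin kg → ZMod 2) → ZMod 2)
    (hf : ∀ n, kf ≤ n → Function.Bijective (induced kf n f))
    (hg : ∀ n, kg ≤ n → Function.Bijective (induced kg n g)) :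
    ∀ n, kf + kg - 1 ≤ n → Function.Bijective (induced (kf + kg - 1) n
      (fun x => g fun a => f fun b => x ⟨(a : ℕ) + (b : ℕ), by
        have ha := a.isLt; have hb := b.isLt; omega⟩)) := by
  have hpos : ∀ (k : ℕ) (h : (Fin k → ZMod 2) → ZMod 2),
      (∀ n, k ≤ n → Function.Bijective (induced k n h)) → 1 ≤ k := by
    intro k h hh
    by_contra hc
    have hk0 : k = 0 := by omega
    subst hk0
    have hb := (hh 1 (by omega)).1
    have heq : (fun _ : ZMod 1 => (0 : ZMod 2)) = (fun _ : ZMod 1 => (1 : ZMod 2)) := by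
      apply hb
      funext i
      exact congrArg h (Subsingleton.elim _ _)
    have := congrFun heq 0
    simp at this
  have hkf : 1 ≤ kf := hpos kf f hf
  have hkg : 1 ≤ kg := hpos kg g hg
  intro n hn
  have key : induced (kf + kg - 1) n
      (fun x => g fun a => f fun b => x ⟨(a : ℕ) + (b : ℕ), by
        have ha := a.isLt; have hb := b.isLt; omega⟩)
      = induced kg n g ∘ induced kf n f := by
    funext x i
    simp only [induced, Function.comp]
    congr 1
    funext a
    congr 1
    funext b
    congr 1
    push_cast
    ring
  rw [key]
  exact (hg n (by omega)).comp (hf n (by omega))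
end

section
/- If f : F_2^k → F_2 is a (k, n)-lifting and m ≥ k is a divisor of n, then f is a (k, m)-lifting. -/
/-- if `f : F_2^k → F_2` is a `(k,n)`-lifting and `m ≥ k` is a divisor
of `n`, then `f` is a `(k,m)`-lifting. -/
theorem stmt7 (k n m : ℕ) (f : (Fin k → ZMod 2) → ZMod 2)
    (hkn : k ≤ n) (hkm : k ≤ m) (hmn : m ∣ n)
    (hf : Function.Bijective (induced k n f)) :
    Function.Bijective (induced k m f) := by
  rcases Nat.eq_zero_or_pos m with hm0 | hm0
  · subst hm0
    obtain rfl : n = 0 := zero_dvd_iff.mp hmn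
    exact hf
  haveI : NeZero m := ⟨hm0.ne'⟩
  set π : ZMod n →+* ZMod m := ZMod.castHom hmn (ZMod m) with hπ
  have hπs : Function.Surjective π := by
    intro y
    obtain ⟨a, ha⟩ := ZMod.intCast_surjective (n := m) y
    exact ⟨(a : ZMod n), by rw [map_intCast, ha]⟩
  have hcompat : ∀ x : ZMod m → ZMod 2,
      induced k n f (fun i => x (π i)) = fun i => induced k m f x (π i) := by
    intro x
    funext i
    simp only [induced]
    congr 1
    funext j
    rw [map_add, map_natCast]
  constructor
  · intro x y hxy
    have h1 : induced k n f (fun i => x (π i)) = induced k n f (fun i => y (π i)) := by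
      rw [hcompat, hcompat, hxy]
    have h2 := hf.injective h1
    funext j
    obtain ⟨i, rfl⟩ := hπs j
    exact congrFun h2 i
  · intro y
    obtain ⟨z, hz⟩ := hf.surjective (fun i => y (π i))
    -- z is periodic with period m
    have hper : ∀ i, z (i + (m : ZMod n)) = z i := by
      have hcomm : induced k n f (fun i => z (i + (m : ZMod n)))
          = fun i => induced k n f z (i + (m : ZMod n)) := by
        funext i
        simp only [induced]
        congr 1
        funext j
        ring_nf
      have heq : induced k n f (fun i => z (i + (m : ZMod n))) = induced k n f z := by
        rw [hcomm, hz]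
        funext i
        simp only
        congr 1
        rw [map_add, map_natCast, ZMod.natCast_self, add_zero]
      have := hf.injective heq
      intro i
      exact congrFun this i
    have hperZ : ∀ (c : ℤ) (i : ZMod n), z (i + (c : ZMod n) * (m : ZMod n)) = z i := by
      intro c
      induction c using Int.induction_on with
      | zero => intro i; simp
      | succ c ih =>
          intro i
          have : i + ((c : ℤ) + 1 : ℤ) * (m : ZMod n)
              = (i + (c : ZMod n) * (m : ZMod n)) + (m : ZMod n) := by
            push_cast; ring
          rw [this, hper]
          push_cast at ih
          exact ih i
      | pred c ih =>
          intro i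
          have h2 : (i + ((-(c : ℤ) - 1 : ℤ) : ZMod n) * (m : ZMod n)) + (m : ZMod n)
              = i + ((-(c : ℤ) : ℤ) : ZMod n) * (m : ZMod n) := by
            push_cast; ring
          have := hper (i + ((-(c : ℤ) - 1 : ℤ) : ZMod n) * (m : ZMod n))
          push_cast at ih
          rw [h2] at this
          push_cast at this ⊢
          rw [ih] at this
          exact this.symm
    -- z factors through π
    have hfactor : ∀ i i' : ZMod n, π i = π i' → z i = z i' := by
      intro i i' h
      obtain ⟨a, ha⟩ := ZMod.intCast_surjective (n := n) (i - i')
      have h0 : ((a : ZMod m)) = 0 := by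
        have : π (i - i') = 0 := by rw [map_sub, h, sub_self]
        rw [← ha, map_intCast] at this
        exact this
      obtain ⟨c, hc⟩ := (ZMod.intCast_zmod_eq_zero_iff_dvd a m).mp h0
      have : i = i' + (c : ZMod n) * (m : ZMod n) := by
        have : i - i' = ((m : ℤ) * c : ℤ) := by rw [← hc, ha]
        have h3 : i - i' = (m : ZMod n) * (c : ZMod n) := by
          rw [this]; push_cast; ring
        linear_combination h3
      rw [this, hperZ]
    refine ⟨fun j => z (Function.surjInv hπs j), ?_⟩
    have hzπ : (fun i => (fun j => z (Function.surjInv hπs j)) (π i)) = z := by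
      funext i
      exact hfactor _ _ (Function.surjInv_eq hπs (π i))
    funext j
    obtain ⟨i, rfl⟩ := hπs j
    rw [← congrFun (hcompat (fun j => z (Function.surjInv hπs j))) i, hzπ]
    exact congrFun hz i
end

section
/- If f : F_2^k → F_2 is a (k, n)-lifting for all sufficiently large n (i.e., there exists N such that f is a (k, n)-lifting for all n ≥ N), then f is a (k, n)-lifting for all n ≥ k. -/
/-- A Boolean function `g` depends on the coordinate `i` if there are two inputs
differing only in coordinate `i` on which `g` takes different values. -/
def DependsOnCoord {k : ℕ} (g : (Fin k → ZMod 2) → ZMod 2) (i : Fin k) : Prop :=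
  ∃ x y : Fin k → ZMod 2, (∀ j, j ≠ i → x j = y j) ∧ g x ≠ g y

/-- if `f : F_2^k → F_2` is a `(k,n)`-lifting for all sufficiently
large `n`, then `f` is a `(k,n)`-lifting for all `n ≥ k`. -/
theorem stmt8 (k : ℕ) (f : (Fin k → ZMod 2) → ZMod 2)
    (hf : ∃ N, ∀ n, N ≤ n → Function.Bijective (induced k n f)) :
    ∀ n, k ≤ n → Function.Bijective (induced k n f) := by
  obtain ⟨N, hN⟩ := hf
  rcases Nat.eq_zero_or_pos k with hk | hk
  · exfalso
    subst hk
    have h := hN (max N 1) (le_max_left _ _)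
    have h0 : (0 : ZMod 2) = 1 := by
      have heq : (fun _ : ZMod (max N 1) => (0 : ZMod 2)) = fun _ => (1 : ZMod 2) := by
        apply h.injective
        funext i
        simp only [induced]
        congr 1
        funext j
        exact j.elim0
      exact congrFun heq 0
    exact absurd h0 (by decide)
  · intro n hn
    haveI : NeZero n := ⟨by omega⟩
    have hdvd : n ∣ n * (N + 1) := ⟨N + 1, rfl⟩
    set m := n * (N + 1) with hm
    have hmN : N ≤ m := by
      have : N + 1 ≤ n * (N + 1) := Nat.le_mul_of_pos_left _ (by omega)
      omega
    have key : ∀ x : ZMod n → ZMod 2,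
        induced k m f (fun i => x (ZMod.castHom hdvd (ZMod n) i)) =
          fun i => induced k n f x (ZMod.castHom hdvd (ZMod n) i) := by
      intro x
      funext i
      simp only [induced]
      congr 1
      funext j
      congr 1
      rw [map_add, map_natCast]
    have hinj : Function.Injective (induced k n f) := by
      intro x y hxy
      have hminj := (hN m hmN).injective
      have hcast : (fun i => x (ZMod.castHom hdvd (ZMod n) i)) =
          fun i => y (ZMod.castHom hdvd (ZMod n) i) := by
        apply hminj
        rw [key x, key y, hxy]
      funext a
      have ha : ZMod.castHom hdvd (ZMod n) ((a.val : ℕ) : ZMod m) = a := by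
        rw [map_natCast]
        exact ZMod.natCast_rightInverse a
      have := congrFun hcast ((a.val : ℕ) : ZMod m)
      simpa [ha] using this
    exact Finite.injective_iff_bijective.mp hinj
end

section
/- Let k and j be integers with 2 ≤ j ≤ k/2, let Ξ = k + 1 − 2j, and let S be a symmetrical subset of {1, 2, …, k} (i.e., l ∈ S if and only if k + 1 − l ∈ S) such that 1 ∈ S and j ∉ S. Suppose S contains an integer t with t ≡ j (mod Ξ). Then the Boolean function f : F_2^k → F_2 given by f(x) = x_j ⊕ (x_{k+1−j} ⊕ 1) ∏_{l ∈ S} x_l is a (k, n)-lifting for every n ≥ k. -/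
/-- A Boolean function `g` depends on the coordinate `i` if there are two inputs
differing only in coordinate `i` on which `g` takes different values. -/
def BoolFunDependsOn {k : ℕ} (g : (Fin k → ZMod 2) → ZMod 2) (i : Fin k) : Prop :=
  ∃ x y : Fin k → ZMod 2, (∀ j, j ≠ i → x j = y j) ∧ g x ≠ g y

-- auxiliary machinery
/-- The "flip indicator" of the local rule, anchored at the flipped position. -/
def cfun {n : ℕ} (S : Finset ℕ) (ol : ℕ → ZMod n) (Xc : ZMod n)
    (z : ZMod n → ZMod 2) (i : ZMod n) : ZMod 2 :=
  (z (i + Xc) + 1) * ∏ l ∈ S.attach, z (i + ol l.1)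

/-- The landscape matches at `i`. -/
def IsMatch {n : ℕ} (S : Finset ℕ) (ol : ℕ → ZMod n) (Xc : ZMod n)
    (z : ZMod n → ZMod 2) (i : ZMod n) : Prop :=
  (∀ l ∈ S, z (i + ol l) = 1) ∧ z (i + Xc) = 0

lemma zmod2_cases (v : ZMod 2) : v = 0 ∨ v = 1 := by revert v; decide

lemma cfun_match {n : ℕ} {S : Finset ℕ} {ol : ℕ → ZMod n} {Xc : ZMod n}
    {z : ZMod n → ZMod 2} {i : ZMod n} (h : IsMatch S ol Xc z i) :
    cfun S ol Xc z i = 1 := by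
  unfold cfun
  rw [h.2, Finset.prod_eq_one fun l _ => h.1 l.1 l.2]
  decide

lemma cfun_notmatch {n : ℕ} {S : Finset ℕ} {ol : ℕ → ZMod n} {Xc : ZMod n}
    {z : ZMod n → ZMod 2} {i : ZMod n} (h : ¬ IsMatch S ol Xc z i) :
    cfun S ol Xc z i = 0 := by
  unfold cfun
  rcases zmod2_cases (z (i + Xc)) with h1 | h1
  · have h2 : ¬ ∀ l ∈ S, z (i + ol l) = 1 := fun hall => h ⟨hall, h1⟩
    push_neg at h2
    obtain ⟨l, hlS, hlv⟩ := h2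
    rw [Finset.prod_eq_zero (Finset.mem_attach S ⟨l, hlS⟩)
      ((zmod2_cases _).resolve_right hlv), mul_zero]
  · rw [h1, show (1 + 1 : ZMod 2) = 0 by decide, zero_mul]

theorem aux_false {n : ℕ} (S : Finset ℕ) (ol : ℕ → ZMod n) (Xc : ZMod n)
    (σ : ℕ → ℕ) (hσ : ∀ l ∈ S, σ l ∈ S) (hσs : ∀ l ∈ S, ol l + ol (σ l) = Xc)
    (t₀ t₁ : ℕ) (ht₀ : t₀ ∈ S) (ht₁ : t₁ ∈ S)
    (qA qA' : ℕ) (hq : qA = qA' + 1)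
    (h₀ : ol t₀ = (qA : ZMod n) * Xc) (h₁ : ol t₁ = -((qA' : ZMod n) * Xc))
    (x y : ZMod n → ZMod 2)
    (hC : ∀ i, x i + cfun S ol Xc x i = y i + cfun S ol Xc y i)
    (i₀ : ZMod n) (hi₀ : x i₀ ≠ y i₀) : False := by
  have h₂ : (qA : ZMod n) * Xc =(qA' : ZMod n) * Xc + Xc := by
    rw [hq]; push_cast; ring
  -- exactly one of x, y matches at a difference point
  have hone : ∀ i, x i ≠ y i →
      (IsMatch S ol Xc x i ∧ ¬ IsMatch S ol Xc y i) ∨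
      (IsMatch S ol Xc y i ∧ ¬ IsMatch S ol Xc x i) := by
    intro i hi
    by_cases hx : IsMatch S ol Xc x i <;> by_cases hy : IsMatch S ol Xc y i
    · refine absurd ?_ hi
      have h := hC i
      rw [cfun_match hx, cfun_match hy] at h
      exact add_right_cancel h
    · exact Or.inl ⟨hx, hy⟩
    · exact Or.inr ⟨hy, hx⟩
    · refine absurd ?_ hi
      have h := hC i
      rw [cfun_notmatch hx, cfun_notmatch hy] at h
      exact add_right_cancel h
  -- key step
  have key : ∀ u v : ZMod n → ZMod 2,
      (∀ i, u i + cfun S ol Xc u i = v i + cfun S ol Xc v i) →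
      ∀ i, IsMatch S ol Xc u i → ¬ IsMatch S ol Xc v i →
      u (i + Xc) = 0 ∧ v (i + Xc) = 1 := by
    intro u v huv i hMu hMv
    refine ⟨hMu.2, ?_⟩
    rcases zmod2_cases (v (i + Xc)) with h1 | h1
    · exfalso
      have hfail : ¬ ∀ l ∈ S, v (i + ol l) = 1 := fun hall => hMv ⟨hall, h1⟩
      push_neg at hfail
      obtain ⟨l, hlS, hlv⟩ := hfail
      have hv0 : v (i + ol l) = 0 := (zmod2_cases _).resolve_right hlv
      have hu1 : u (i + ol l) = 1 := hMu.1 l hlS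
      have hne : u (i + ol l) ≠ v (i + ol l) := by
        rw [hu1, hv0]; decide
      have hmatch : IsMatch S ol Xc u (i + ol l) ∨ IsMatch S ol Xc v (i + ol l) := by
        by_contra hnn
        push_neg at hnn
        have h := huv (i + ol l)
        rw [cfun_notmatch hnn.1, cfun_notmatch hnn.2] at h
        exact hne (add_right_cancel h)
      have harg : i + ol l + ol (σ l) = i + Xc := by
        rw [add_assoc, hσs l hlS]
      rcases hmatch with hm | hm
      · have h2 := hm.1 (σ l) (hσ l hlS)
        rw [harg, hMu.2] at h2
        exact (by decide : (0 : ZMod 2) ≠ 1) h2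
      · have h2 := hm.1 (σ l) (hσ l hlS)
        rw [harg, h1] at h2
        exact (by decide : (0 : ZMod 2) ≠ 1) h2
    · exact h1
  have hCsymm : ∀ i, y i + cfun S ol Xc y i = x i + cfun S ol Xc x i :=
    fun i => (hC i).symm
  have EStep : ∀ i, x i ≠ y i → x (i + Xc) ≠ y (i + Xc) := by
    intro i hi
    rcases hone i hi with ⟨hx, hy⟩ | ⟨hy, hx⟩
    · obtain ⟨h0, h1⟩ := key x y hC i hx hy
      rw [h0, h1]; decide
    · obtain ⟨h0, h1⟩ := key y x hCsymm i hy hx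
      rw [h1, h0]; decide
  have Ecl : ∀ (s : ℕ) (i : ZMod n), x i ≠ y i →
      x (i + (s : ZMod n) * Xc) ≠ y (i + (s : ZMod n) * Xc) := by
    intro s
    induction s with
    | zero => intro i hi; simpa using hi
    | succ s ih =>
        intro i hi
        have h := EStep _ (ih i hi)
        have e : i + ((s + 1 : ℕ) : ZMod n) * Xc = i + (s : ZMod n) * Xc + Xc := by
          push_cast; ring
        rw [e]; exact h
  -- conflicts
  have conflict1 : ∀ (z : ZMod n → ZMod 2) (i : ZMod n),
      IsMatch S ol Xc z i → IsMatch S ol Xc z (i + (qA : ZMod n) * Xc) → False := by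
    intro z i h h'
    have hv := h'.1 t₁ ht₁
    have harg : i + (qA : ZMod n) * Xc + ol t₁ = i + Xc := by
      rw [h₁, h₂]; ring
    rw [harg, h.2] at hv
    exact (by decide : (0 : ZMod 2) ≠ 1) hv
  have conflict2 : ∀ (z : ZMod n → ZMod 2) (i : ZMod n),
      IsMatch S ol Xc z i → IsMatch S ol Xc z (i + (qA' : ZMod n) * Xc) → False := by
    intro z i h h'
    have hv := h.1 t₀ ht₀
    have harg : i + ol t₀ = i + (qA' : ZMod n) * Xc + Xc := by
      rw [h₀, h₂]; ring
    rw [harg, h'.2] at hv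
    exact (by decide : (0 : ZMod 2) ≠ 1) hv
  -- label steps
  have C1 : ∀ q : ℕ, (∀ (z : ZMod n → ZMod 2) (i : ZMod n),
        IsMatch S ol Xc z i → IsMatch S ol Xc z (i + (q : ZMod n) * Xc) → False) →
      ∀ i, x i ≠ y i → x (i + (q : ZMod n) * Xc) ≠ y (i + (q : ZMod n) * Xc) →
      cfun S ol Xc x (i + (q : ZMod n) * Xc) = cfun S ol Xc x i + 1 := by
    intro q hconf i hi hi'
    rcases hone i hi with ⟨hx, hy⟩ | ⟨hy, hx⟩ <;>
      rcases hone _ hi' with ⟨hx', hy'⟩ | ⟨hy', hx'⟩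
    · exact (hconf x i hx hx').elim
    · rw [cfun_notmatch hx', cfun_match hx]; decide
    · rw [cfun_match hx', cfun_notmatch hx]; decide
    · exact (hconf y i hy hy').elim
  -- iteration
  have Iter : ∀ (q : ℕ),
      (∀ i, x i ≠ y i → x (i + (q : ZMod n) * Xc) ≠ y (i + (q : ZMod n) * Xc) →
        cfun S ol Xc x (i + (q : ZMod n) * Xc) = cfun S ol Xc x i + 1) →
      ∀ r : ℕ, cfun S ol Xc x (i₀ + (r : ZMod n) * ((q : ZMod n) * Xc)) =
        cfun S ol Xc x i₀ + (r : ZMod 2) := by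
    intro q hstep r
    induction r with
    | zero => simp
    | succ r ih =>
        have hEr : x (i₀ + (r : ZMod n) * ((q : ZMod n) * Xc)) ≠
            y (i₀ + (r : ZMod n) * ((q : ZMod n) * Xc)) := by
          have e : i₀ + (r : ZMod n) * ((q : ZMod n) * Xc) =
              i₀ + ((r * q : ℕ) : ZMod n) * Xc := by push_cast; ring
          rw [e]; exact Ecl (r * q) i₀ hi₀
        have hEr1 : x (i₀ + (r : ZMod n) * ((q : ZMod n) * Xc) + (q : ZMod n) * Xc) ≠
            y (i₀ + (r : ZMod n) * ((q : ZMod n) * Xc) + (q : ZMod n) * Xc) := by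
          have e : i₀ + (r : ZMod n) * ((q : ZMod n) * Xc) + (q : ZMod n) * Xc =
              i₀ + (((r + 1) * q : ℕ) : ZMod n) * Xc := by push_cast; ring
          rw [e]; exact Ecl ((r + 1) * q) i₀ hi₀
        have e : i₀ + ((r + 1 : ℕ) : ZMod n) * ((q : ZMod n) * Xc) =
            i₀ + (r : ZMod n) * ((q : ZMod n) * Xc) + (q : ZMod n) * Xc := by
          push_cast; ring
        rw [e, hstep _ hEr hEr1, ih]
        push_cast; ring
  have I1 := Iter qA (C1 qA conflict1) qA'
  have I2 := Iter qA' (C1 qA' conflict2) qA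
  have hpt : i₀ + (qA' : ZMod n) * ((qA : ZMod n) * Xc) =
      i₀ + (qA : ZMod n) * ((qA' : ZMod n) * Xc) := by ring
  rw [hpt] at I1
  have hfin : ((qA' : ZMod 2)) = ((qA : ZMod 2)) :=
    add_left_cancel (I1.symm.trans I2)
  rw [hq] at hfin
  push_cast at hfin
  exact one_ne_zero (left_eq_add.mp hfin)

/-- let `2 ≤ j ≤ k/2`, `Ξ = k + 1 - 2j`, and let `S ⊆ {1,…,k}` be
symmetrical (`l ∈ S ↔ k+1-l ∈ S`) with `1 ∈ S`, `j ∉ S`, and containing some `t`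
with `t ≡ j (mod Ξ)`. Then `f(x) = x_j ⊕ (x_{k+1-j} ⊕ 1) ∏_{l ∈ S} x_l`
(1-based indices) is a `(k,n)`-lifting for every `n ≥ k`. -/
theorem stmt11 (k j : ℕ) (hj : 2 ≤ j) (hjk : 2 * j ≤ k)
    (S : Finset ℕ) (hS : S ⊆ Finset.Icc 1 k)
    (hsym : ∀ l ∈ Finset.Icc 1 k, (l ∈ S ↔ k + 1 - l ∈ S))
    (h1 : 1 ∈ S) (hjS : j ∉ S)
    (ht : ∃ t ∈ S, t % (k + 1 - 2 * j) = j % (k + 1 - 2 * j)) :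
    ∀ n, k ≤ n → Function.Bijective (induced k n
      (fun x => x ⟨j - 1, by omega⟩ +
        (x ⟨k - j, by omega⟩ + 1) *
          ∏ l ∈ S.attach, x ⟨l.1 - 1, by
            have h := hS l.2
            rw [Finset.mem_Icc] at h
            omega⟩)) := by

  intro n hn
  haveI : NeZero n := ⟨by omega⟩
  rw [← Finite.injective_iff_bijective]
  intro x y hxy
  by_contra hne
  have hex : ∃ i, x i ≠ y i := by
    by_contra hno; push_neg at hno; exact hne (funext hno)
  obtain ⟨i₀, hi₀⟩ := hex
  set Ξ : ℕ := k + 1 - 2 * j with hΞ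
  obtain ⟨t, htS, htmod⟩ := ht
  have htI := Finset.mem_Icc.mp (hS htS)
  have hsymm : ∀ l ∈ S, k + 1 - l ∈ S := fun l hl => (hsym l (hS hl)).mp hl
  have htj : t ≠ j := fun h => hjS (h ▸ htS)
  -- numeric witnesses
  have hmain : ∃ qA' t₀ t₁ : ℕ, t₀ ∈ S ∧ t₁ ∈ S ∧
      t₀ - 1 = (j - 1) + (qA' + 1) * Ξ ∧ j - 1 = (t₁ - 1) + qA' * Ξ := by
    rcases Nat.lt_or_ge t j with hlt | hge
    · have hd : Ξ ∣ j - t := (Nat.modEq_iff_dvd' hlt.le).mp htmod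
      obtain ⟨m, hm⟩ := hd
      rcases m with _ | m'
      · rw [Nat.mul_zero] at hm; omega
      · refine ⟨m' + 1, k + 1 - t, t, hsymm t htS, htS, ?_, ?_⟩
        · have e : (m' + 1 + 1) * Ξ = Ξ * (m' + 1) + Ξ := by ring
          rw [e, ← hm]; omega
        · have e : (m' + 1) * Ξ = Ξ * (m' + 1) := by ring
          rw [e, ← hm]; omega
    · have hgt : j < t := by omega
      have hd : Ξ ∣ t - j := (Nat.modEq_iff_dvd' hge).mp htmod.symm
      obtain ⟨m, hm⟩ := hd
      rcases m with _ | m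
      · rw [Nat.mul_zero] at hm; omega
      rcases m with _ | m'
      · rw [Nat.mul_one] at hm
        have hts : k + 1 - t = j := by omega
        exact absurd (hts ▸ hsymm t htS) hjS
      · refine ⟨m' + 1, t, k + 1 - t, htS, hsymm t htS, ?_, ?_⟩
        · have e : (m' + 1 + 1) * Ξ = Ξ * (m' + 1 + 1) := by ring
          rw [e, ← hm]; omega
        · have e2 : (m' + 1) * Ξ + Ξ = Ξ * (m' + 1 + 1) := by ring
          rw [← hm] at e2
          generalize hP : (m' + 1) * Ξ = P at e2 ⊢
          omega
  obtain ⟨qA', t₀, t₁, ht₀S, ht₁S, hq1, hq2⟩ := hmain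
  -- ZMod-level data
  refine aux_false S (fun l => ((l - 1 : ℕ) : ZMod n) - ((j - 1 : ℕ) : ZMod n))
    ((Ξ : ℕ) : ZMod n) (fun l => k + 1 - l) hsymm ?_ t₀ t₁ ht₀S ht₁S
    (qA' + 1) qA' rfl ?_ ?_ x y ?_ i₀ hi₀
  · -- hσs
    intro l hl
    have hlI := Finset.mem_Icc.mp (hS hl)
    have e : (l - 1) + (k + 1 - l - 1) = (j - 1) + (j - 1) + Ξ := by omega
    have ec := congrArg (fun m : ℕ => (m : ZMod n)) e
    push_cast at ec
    linear_combination ec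
  · -- h₀
    have ec := congrArg (fun m : ℕ => (m : ZMod n)) hq1
    push_cast at ec
    push_cast
    linear_combination ec
  · -- h₁
    have ec := congrArg (fun m : ℕ => (m : ZMod n)) hq2
    push_cast at ec
    push_cast
    linear_combination -ec
  · -- hC
    intro i
    have h1 : x ((i - ((j - 1 : ℕ) : ZMod n)) + ((j - 1 : ℕ) : ZMod n)) +
        (x ((i - ((j - 1 : ℕ) : ZMod n)) + ((k - j : ℕ) : ZMod n)) + 1) *
          ∏ l ∈ S.attach, x ((i - ((j - 1 : ℕ) : ZMod n)) + ((l.1 - 1 : ℕ) : ZMod n)) =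
        y ((i - ((j - 1 : ℕ) : ZMod n)) + ((j - 1 : ℕ) : ZMod n)) +
        (y ((i - ((j - 1 : ℕ) : ZMod n)) + ((k - j : ℕ) : ZMod n)) + 1) *
          ∏ l ∈ S.attach, y ((i - ((j - 1 : ℕ) : ZMod n)) + ((l.1 - 1 : ℕ) : ZMod n)) :=
      congrFun hxy (i - ((j - 1 : ℕ) : ZMod n))
    have e1 : (i - ((j - 1 : ℕ) : ZMod n)) + ((j - 1 : ℕ) : ZMod n) = i := by ring
    have e2 : (i - ((j - 1 : ℕ) : ZMod n)) + ((k - j : ℕ) : ZMod n) =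
        i + ((Ξ : ℕ) : ZMod n) := by
      have ekj : (k - j : ℕ) = (j - 1) + Ξ := by omega
      rw [ekj, Nat.cast_add]; ring
    have e3 : ∀ z : ZMod n → ZMod 2,
        (∏ l ∈ S.attach, z ((i - ((j - 1 : ℕ) : ZMod n)) + ((l.1 - 1 : ℕ) : ZMod n))) =
        ∏ l ∈ S.attach, z (i + (((l.1 - 1 : ℕ) : ZMod n) - ((j - 1 : ℕ) : ZMod n))) := by
      intro z
      refine Finset.prod_congr rfl fun l _ => ?_
      congr 1
      ring
    rw [e1, e2, e3 x, e3 y] at h1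
    exact h1
end

section
/- Let k and j be integers with 2 ≤ j ≤ k/2, let Ξ = k + 1 − 2j, and let S be a symmetrical subset of {1, 2, …, k} (i.e., l ∈ S if and only if k + 1 − l ∈ S). For n ≥ k define F : F_2^n → F_2^n by F(x)_i = x_i ⊕ (x_{i+Ξ} ⊕ 1) ∏_{l ∈ S} x_{i−j+l}, with indices modulo n. Then for all x ∈ F_2^n and all i, F(F(x))_i = x_i ⊕ (x_{i+2Ξ} ⊕ 1) ∏_{l ∈ S} x_{i−j+l} · x_{i+Ξ−j+l}. -/
/-- let `2 ≤ j ≤ k/2`, `Ξ = k + 1 - 2j`, let `S ⊆ {1,…,k}` be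
symmetrical, and `n ≥ k`. Define `F : F_2^n → F_2^n` by
`F(x)_i = x_i ⊕ (x_{i+Ξ} ⊕ 1) ∏_{l ∈ S} x_{i-j+l}` (indices mod `n`). Then
`F(F(x))_i = x_i ⊕ (x_{i+2Ξ} ⊕ 1) ∏_{l ∈ S} x_{i-j+l} x_{i+Ξ-j+l}`. -/
theorem stmt12 (k j n : ℕ) (hj : 2 ≤ j) (hjk : 2 * j ≤ k) (hn : k ≤ n)
    (S : Finset ℕ) (hS : S ⊆ Finset.Icc 1 k)
    (hsym : ∀ l ∈ Finset.Icc 1 k, (l ∈ S ↔ k + 1 - l ∈ S))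
    (F : (ZMod n → ZMod 2) → ZMod n → ZMod 2)
    (hF : ∀ (y : ZMod n → ZMod 2) (i : ZMod n),
      F y i = y i + (y (i + ((k + 1 - 2 * j : ℕ) : ZMod n)) + 1) *
        ∏ l ∈ S, y (i - (j : ZMod n) + (l : ZMod n))) :
    ∀ (x : ZMod n → ZMod 2) (i : ZMod n),
      F (F x) i = x i + (x (i + 2 * ((k + 1 - 2 * j : ℕ) : ZMod n)) + 1) *
        ∏ l ∈ S, x (i - (j : ZMod n) + (l : ZMod n)) *
          x (i + ((k + 1 - 2 * j : ℕ) : ZMod n) - (j : ZMod n) + (l : ZMod n)) := by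
  intro x i
  set τ : ZMod n := ((k + 1 - 2 * j : ℕ) : ZMod n) with hτ
  have two01 : ∀ a : ZMod 2, a = 0 ∨ a = 1 := by decide
  have hτ' : τ = ((k + 1 : ℕ) : ZMod n) - 2 * (j : ZMod n) := by
    rw [hτ, Nat.cast_sub (by omega : 2 * j ≤ k + 1)]
    push_cast; ring
  have hpartner : ∀ l ∈ S, (k + 1 - l) ∈ S ∧
      ((k + 1 - l : ℕ) : ZMod n) = ((k + 1 : ℕ) : ZMod n) - (l : ZMod n) := by
    intro l hl
    have hl' := hS hl
    simp only [Finset.mem_Icc] at hl'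
    exact ⟨(hsym l (hS hl)).mp hl, by rw [Nat.cast_sub (by omega)]⟩
  set P : ZMod n → ZMod 2 := fun t => ∏ l ∈ S, x (t - (j : ZMod n) + (l : ZMod n)) with hP
  have hFx : ∀ t, F x t = x t + (x (t + τ) + 1) * P t := fun t => hF x t
  have hall : ∀ t, P t = 1 → ∀ l ∈ S, x (t - (j : ZMod n) + (l : ZMod n)) = 1 := by
    intro t ht l hl
    rcases two01 (x (t - (j : ZMod n) + (l : ZMod n))) with h | h
    · have : P t = 0 := Finset.prod_eq_zero hl h
      rw [this] at ht; exact absurd ht (by decide)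
    · exact h
  -- key index identity: (t - j + l) - j + (k+1-l) = t + τ for l ∈ S
  have hidx : ∀ (t : ZMod n), ∀ l ∈ S,
      (t - (j : ZMod n) + (l : ZMod n)) - (j : ZMod n) + ((k + 1 - l : ℕ) : ZMod n)
        = t + τ := by
    intro t l hl
    rw [(hpartner l hl).2, hτ']; ring
  -- if x (t + τ) = 0 then P (t - j + l) = 0 for l ∈ S
  have hPzero : ∀ (t : ZMod n), x (t + τ) = 0 → ∀ l ∈ S,
      P (t - (j : ZMod n) + (l : ZMod n)) = 0 := by
    intro t ht l hl
    have := hidx t l hl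
    exact Finset.prod_eq_zero (hpartner l hl).1 (by rw [this, ht])
  rw [hF (F x) i]
  have hRHS : (∏ l ∈ S, x (i - (j : ZMod n) + (l : ZMod n)) *
      x (i + τ - (j : ZMod n) + (l : ZMod n))) = P i * P (i + τ) :=
    Finset.prod_mul_distrib
  rw [hRHS, hFx i]
  have h2τ : i + τ + τ = i + 2 * τ := by ring
  rcases two01 (P i) with hPi | hPi
  · -- P i = 0 : pick a zero factor
    rw [hPi, mul_zero, add_zero, zero_mul, mul_zero, add_zero]
    -- goal: x i + (F x (i+τ)+1) * ∏ F x (i-j+l) = x i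
    obtain ⟨l0, hl0S, hl0⟩ : ∃ l ∈ S, x (i - (j : ZMod n) + (l : ZMod n)) = 0 := by
      have := (Finset.prod_eq_zero_iff).mp hPi
      exact this
    rcases two01 (F x (i - (j : ZMod n) + (l0 : ZMod n))) with hFl0 | hFl0
    · rw [Finset.prod_eq_zero hl0S hFl0, mul_zero, add_zero]
    · -- the zero got flipped: extract consequences
      rw [hFx _, hl0, zero_add] at hFl0
      have hxshift : x (i - (j : ZMod n) + (l0 : ZMod n) + τ) = 0 := by
        rcases two01 (x (i - (j : ZMod n) + (l0 : ZMod n) + τ)) with h | h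
        · exact h
        · rw [h] at hFl0
          simp at hFl0
      rw [hxshift, zero_add, one_mul] at hFl0
      -- hFl0 : P (i - j + l0) = 1; deduce x (i + τ) = 1
      have hiτ : x (i + τ) = 1 := by
        have := hall _ hFl0 (k + 1 - l0) (hpartner l0 hl0S).1
        rwa [hidx i l0 hl0S] at this
      -- P (i + τ) = 0 since factor at l0 is x(i - j + l0 + τ) = 0
      have hPiτ : P (i + τ) = 0 := by
        refine Finset.prod_eq_zero hl0S ?_
        have e : i + τ - (j : ZMod n) + (l0 : ZMod n)
            = i - (j : ZMod n) + (l0 : ZMod n) + τ := by ring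
        rw [e, hxshift]
      rw [hFx (i + τ), hPiτ, mul_zero, add_zero, hiτ,
        show (1 : ZMod 2) + 1 = 0 from rfl, zero_mul, add_zero]
  · -- P i = 1
    rw [hPi, mul_one, one_mul]
    rcases two01 (P (i + τ)) with hPiτ | hPiτ
    · -- P (i+τ) = 0, RHS correction zero
      rw [hPiτ, mul_zero, add_zero]
      rw [hFx (i + τ), hPiτ, mul_zero, add_zero]
      rcases two01 (x (i + τ)) with hxτ | hxτ
      · -- x(i+τ) = 0 : show all F x (i - j + l) = 1
        have hprodF : (∏ l ∈ S, F x (i - (j : ZMod n) + (l : ZMod n))) = 1 := by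
          refine Finset.prod_eq_one (fun l hl => ?_)
          rw [hFx _, hall i hPi l hl, hPzero i hxτ l hl, mul_zero, add_zero]
        rw [hprodF, hxτ, mul_one]
        rcases two01 (x i) with hxi | hxi <;> rw [hxi] <;> decide
      · rw [hxτ, show (1 : ZMod 2) + 1 = 0 from rfl, zero_mul, add_zero, add_zero]
    · -- P (i+τ) = 1 : all shifted coords are 1, products of F x are 1
      rw [hPiτ, mul_one]
      have hprodF : (∏ l ∈ S, F x (i - (j : ZMod n) + (l : ZMod n))) = 1 := by
        refine Finset.prod_eq_one (fun l hl => ?_)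
        have e : i - (j : ZMod n) + (l : ZMod n) + τ
            = i + τ - (j : ZMod n) + (l : ZMod n) := by ring
        rw [hFx _, hall i hPi l hl, e, hall (i + τ) hPiτ l hl,
          show (1 : ZMod 2) + 1 = 0 from rfl, zero_mul, add_zero]
      rw [hprodF, hFx (i + τ), hPiτ, mul_one, h2τ]
      rcases two01 (x (i + τ)) with h | h <;>
        rcases two01 (x (i + 2 * τ)) with h' | h' <;>
          rcases two01 (x i) with hxi | hxi <;> rw [h, h', hxi] <;> decide
end

section
/- For every integer r ≥ 2, the Boolean function f : F_2^{2r} → F_2 given by f(x) = x_r ⊕ Σ_{j=1}^{r−1} (x_j ⊕ 1)(x_{r+j+1} ⊕ 1) (∏_{k=1}^{j} x_{r+k}) (∏_{k=j+1}^{r} (x_k ⊕ 1) ⊕ ∏_{k=j+1}^{r} x_k) is a (2r, n)-lifting for every n ≥ 2r. -/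
set_option maxHeartbeats 1000000

namespace S13

/-- Block predicate: word `0^a 1^(r-a)` between zeros at `q` and `q+r+1`. -/
def W (r n : ℕ) (a : ℕ) (q : ZMod n) (x : ZMod n → ZMod 2) : Prop :=
  x q = 0 ∧ (∀ t ∈ Finset.Icc 1 a, x (q + (t : ZMod n)) = 0) ∧
    (∀ t ∈ Finset.Icc (a + 1) r, x (q + (t : ZMod n)) = 1) ∧
    x (q + ((r + 1 : ℕ) : ZMod n)) = 0

def Flips (r n : ℕ) (p : ZMod n) (x : ZMod n → ZMod 2) : Prop :=
  ∃ a s : ℕ, ∃ q : ZMod n, a ≤ r - 1 ∧ 1 ≤ s ∧ s ≤ r - 1 ∧ (a ≠ 0 → s = a) ∧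
    p = q + (s : ZMod n) ∧ W r n a q x

def Flips' (r n : ℕ) (p : ZMod n) (y : ZMod n → ZMod 2) : Prop :=
  ∃ a s : ℕ, ∃ q : ZMod n, a ≤ r - 1 ∧ 1 ≤ s ∧ s ≤ r - 1 ∧ (a ≠ r - 1 → s = a + 1) ∧
    p = q + (s : ZMod n) ∧ W r n a q y

open Classical in
noncomputable def gmap (r n : ℕ) (x : ZMod n → ZMod 2) (p : ZMod n) : ZMod 2 :=
  x p + if Flips r n p x then 1 else 0

open Classical in
noncomputable def hmap (r n : ℕ) (y : ZMod n → ZMod 2) (p : ZMod n) : ZMod 2 :=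
  y p + if Flips' r n p y then 1 else 0

lemma addshift {n : ℕ} (q : ZMod n) (a b c : ℕ) (h : a + b = c) :
    q + (a : ZMod n) + (b : ZMod n) = q + (c : ZMod n) := by
  rw [add_assoc, ← Nat.cast_add, h]

lemma zm01 : ∀ u : ZMod 2, u = 0 ∨ u = 1 := by decide

lemma master {r n : ℕ} {a a' d : ℕ} {q q' : ZMod n} {x : ZMod n → ZMod 2}
    (hr : 2 ≤ r) (ha : a ≤ r - 1) (ha' : a' ≤ r - 1) (hd1 : 1 ≤ d) (hd2 : d ≤ r)
    (hq : q' = q + (d : ZMod n)) (h1 : W r n a q x) (h2 : W r n a' q' x) : False := by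
  obtain ⟨z1, zs1, os1, b1⟩ := h1
  obtain ⟨z2, zs2, os2, b2⟩ := h2
  rcases le_or_gt d a with hda | hda
  · rcases le_or_gt (d + a') r with hsum | hsum
    · have h := os2 (r + 1 - d) (by rw [Finset.mem_Icc]; omega)
      rw [hq, addshift q d (r + 1 - d) (r + 1) (by omega)] at h
      rw [b1] at h
      exact absurd h (by decide)
    · have h := zs2 (a + 1 - d) (by rw [Finset.mem_Icc]; omega)
      rw [hq, addshift q d (a + 1 - d) (a + 1) (by omega)] at h
      have h' := os1 (a + 1) (by rw [Finset.mem_Icc]; omega)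
      rw [h] at h'
      exact absurd h' (by decide)
  · have h := os1 d (by rw [Finset.mem_Icc]; omega)
    rw [hq] at z2
    rw [z2] at h
    exact absurd h (by decide)

lemma same {r n : ℕ} {a a' : ℕ} {q : ZMod n} {x : ZMod n → ZMod 2}
    (ha : a ≤ r - 1) (ha' : a' ≤ r - 1)
    (h1 : W r n a q x) (h2 : W r n a' q x) : a = a' := by
  by_contra hne
  obtain ⟨z1, zs1, os1, b1⟩ := h1
  obtain ⟨z2, zs2, os2, b2⟩ := h2
  rcases Nat.lt_or_ge a a' with h | h
  · have h1' := os1 (a + 1) (by rw [Finset.mem_Icc]; omega)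
    have h2' := zs2 (a + 1) (by rw [Finset.mem_Icc]; omega)
    rw [h2'] at h1'
    exact absurd h1' (by decide)
  · have hlt : a' < a := by omega
    have h1' := os2 (a' + 1) (by rw [Finset.mem_Icc]; omega)
    have h2' := zs1 (a' + 1) (by rw [Finset.mem_Icc]; omega)
    rw [h2'] at h1'
    exact absurd h1' (by decide)

lemma rel {n : ℕ} {q q' : ZMod n} {s t : ℕ} (h : q' + (s : ZMod n) = q + (t : ZMod n)) :
    (s ≤ t ∧ q' = q + ((t - s : ℕ) : ZMod n)) ∨ (t < s ∧ q = q' + ((s - t : ℕ) : ZMod n)) := by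
  rcases le_or_gt s t with hst | hst
  · left
    refine ⟨hst, ?_⟩
    have h2 : q + ((t - s : ℕ) : ZMod n) + (s : ZMod n) = q + (t : ZMod n) :=
      addshift q (t - s) s t (by omega)
    rw [← h2] at h
    exact add_right_cancel h
  · right
    refine ⟨hst, ?_⟩
    have h2 : q' + ((s - t : ℕ) : ZMod n) + (t : ZMod n) = q' + (s : ZMod n) :=
      addshift q' (s - t) t s (by omega)
    rw [← h2] at h
    exact (add_right_cancel h).symm

lemma window {r n : ℕ} {a t : ℕ} {q : ZMod n} {x : ZMod n → ZMod 2}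
    (hr : 2 ≤ r) (ha : a ≤ r - 1) (ht : t ≤ r + 1) (hW : W r n a q x) :
    Flips r n (q + (t : ZMod n)) x ↔ ((1 ≤ a ∧ t = a) ∨ (a = 0 ∧ 1 ≤ t ∧ t ≤ r - 1)) := by
  constructor
  · rintro ⟨a₀, s₀, q₀, ha₀, hs1, hs2, hsa, hp, hW₀⟩
    rcases rel hp with ⟨hst, hq0⟩ | ⟨hst, hq0⟩
    · -- hst : t ≤ s₀, hq0 : q = q₀ + (s₀ - t)
      rcases Nat.eq_zero_or_pos (s₀ - t) with hz | hpos
      · have hq0' : q = q₀ := by rw [hq0, hz, Nat.cast_zero, add_zero]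
        rw [← hq0'] at hW₀
        have hsame := same ha ha₀ hW hW₀
        have hts : t = s₀ := by omega
        by_cases h0 : a₀ = 0
        · right
          exact ⟨by omega, by omega, by omega⟩
        · left
          have := hsa h0
          exact ⟨by omega, by omega⟩
      · exact absurd hW (fun hc => master hr ha₀ ha hpos (by omega) hq0 hW₀ hc)
    · -- hst : s₀ < t, hq0 : q₀ = q + (t - s₀)
      exact absurd hW₀ (fun hc => master hr ha ha₀ (by omega) (by omega) hq0 hW hc)
  · rintro (⟨ha1, hta⟩ | ⟨h0, ht1, ht2⟩)
    · exact ⟨a, t, q, ha, by omega, by omega, fun _ => hta, rfl, hW⟩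
    · subst h0
      exact ⟨0, t, q, by omega, ht1, ht2, fun h => absurd rfl h, rfl, hW⟩

lemma step {r n : ℕ} {a : ℕ} {q : ZMod n} {x : ZMod n → ZMod 2}
    (hr : 2 ≤ r) (ha : a ≤ r - 1) (hW : W r n a q x) :
    W r n (if a = 0 then r - 1 else a - 1) q (gmap r n x) := by
  classical
  have hg : ∀ t, t ≤ r + 1 → gmap r n x (q + (t : ZMod n)) =
      x (q + (t : ZMod n)) +
        (if ((1 ≤ a ∧ t = a) ∨ (a = 0 ∧ 1 ≤ t ∧ t ≤ r - 1)) then 1 else 0) := by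
    intro t ht
    unfold gmap
    rw [if_congr (window hr ha ht hW) rfl rfl]
  obtain ⟨z1, zs1, os1, b1⟩ := hW
  have hg0 : gmap r n x q = x q + (if ((1 ≤ a ∧ 0 = a) ∨ (a = 0 ∧ 1 ≤ 0 ∧ 0 ≤ r - 1)) then 1 else 0) := by
    have := hg 0 (by omega)
    rwa [Nat.cast_zero, add_zero] at this
  by_cases h0 : a = 0
  · subst h0
    rw [if_pos rfl]
    refine ⟨?_, ?_, ?_, ?_⟩
    · rw [hg0, if_neg (by omega), z1, add_zero]
    · intro t htm
      rw [Finset.mem_Icc] at htm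
      rw [hg t (by omega), if_pos (Or.inr ⟨rfl, htm.1, htm.2⟩),
        os1 t (by rw [Finset.mem_Icc]; omega)]
      decide
    · intro t htm
      rw [Finset.mem_Icc] at htm
      rw [hg t (by omega), if_neg (by omega),
        os1 t (by rw [Finset.mem_Icc]; omega), add_zero]
    · rw [hg (r + 1) (by omega), if_neg (by omega), b1, add_zero]
  · rw [if_neg h0]
    refine ⟨?_, ?_, ?_, ?_⟩
    · rw [hg0, if_neg (by omega), z1, add_zero]
    · intro t htm
      rw [Finset.mem_Icc] at htm
      rw [hg t (by omega), if_neg (by omega),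
        zs1 t (by rw [Finset.mem_Icc]; omega), add_zero]
    · intro t htm
      rw [Finset.mem_Icc] at htm
      by_cases hta : t = a
      · subst hta
        rw [hg t (by omega), if_pos (Or.inl ⟨by omega, rfl⟩),
          zs1 t (by rw [Finset.mem_Icc]; omega)]
        decide
      · rw [hg t (by omega), if_neg (by omega),
          os1 t (by rw [Finset.mem_Icc]; omega), add_zero]
    · rw [hg (r + 1) (by omega), if_neg (by omega), b1, add_zero]

lemma conv_step {r n : ℕ} {a' : ℕ} {q : ZMod n} {x : ZMod n → ZMod 2}
    (hr : 2 ≤ r) (ha' : a' ≤ r - 1) (hW' : W r n a' q (gmap r n x)) :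
    W r n (if a' = r - 1 then 0 else a' + 1) q x := by
  classical
  by_cases hEx : ∃ t, t ≤ r + 1 ∧ Flips r n (q + (t : ZMod n)) x
  · obtain ⟨t, ht, a₀, s₀, q₀, ha₀, hs1, hs2, hsa, hp, hW₀⟩ := hEx
    have hstep := step hr ha₀ hW₀
    have hb' : (if a₀ = 0 then r - 1 else a₀ - 1) ≤ r - 1 := by split <;> omega
    rcases rel hp with ⟨hst, hq0⟩ | ⟨hst, hq0⟩
    · rcases Nat.eq_zero_or_pos (s₀ - t) with hz | hpos
      · have hq0' : q = q₀ := by rw [hq0, hz, Nat.cast_zero, add_zero]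
        rw [← hq0'] at hstep hW₀
        have hsame := same ha' hb' hW' hstep
        have : (if a' = r - 1 then 0 else a' + 1) = a₀ := by
          by_cases h00 : a₀ = 0
          · rw [if_pos h00] at hsame
            rw [if_pos (by omega : a' = r - 1)]
            omega
          · rw [if_neg h00] at hsame
            rw [if_neg (by omega : ¬ a' = r - 1)]
            omega
        rw [this]
        exact hW₀
      · exact absurd hW' (fun hc => master hr hb' ha' hpos (by omega) hq0 hstep hc)
    · exact absurd hstep (fun hc => master hr ha' hb' (by omega) (by omega) hq0 hW' hc)
  · push_neg at hEx
    have hxy : ∀ t, t ≤ r + 1 → x (q + (t : ZMod n)) = gmap r n x (q + (t : ZMod n)) := by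
      intro t ht
      unfold gmap
      rw [if_neg (hEx t ht), add_zero]
    have hWx : W r n a' q x := by
      obtain ⟨z1, zs1, os1, b1⟩ := hW'
      refine ⟨?_, ?_, ?_, ?_⟩
      · have := hxy 0 (by omega)
        rw [Nat.cast_zero, add_zero] at this
        rw [this]; exact z1
      · intro t htm
        rw [Finset.mem_Icc] at htm
        rw [hxy t (by omega)]
        exact zs1 t (by rw [Finset.mem_Icc]; omega)
      · intro t htm
        rw [Finset.mem_Icc] at htm
        rw [hxy t (by omega)]
        exact os1 t (by rw [Finset.mem_Icc]; omega)
      · rw [hxy (r + 1) (by omega)]; exact b1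
    exfalso
    by_cases h0 : a' = 0
    · exact hEx 1 (by omega) ((window hr ha' (by omega) hWx).mpr (Or.inr ⟨h0, le_rfl, by omega⟩))
    · exact hEx a' (by omega) ((window hr ha' (by omega) hWx).mpr (Or.inl ⟨by omega, rfl⟩))

lemma flips_iff {r n : ℕ} (hr : 2 ≤ r) (p : ZMod n) (x : ZMod n → ZMod 2) :
    Flips' r n p (gmap r n x) ↔ Flips r n p x := by
  constructor
  · rintro ⟨a', s, q, ha', hs1, hs2, hcond, rfl, hW'⟩
    have hx := conv_step hr ha' hW'
    by_cases h : a' = r - 1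
    · rw [if_pos h] at hx
      exact ⟨0, s, q, by omega, hs1, hs2, fun h' => absurd rfl h', rfl, hx⟩
    · rw [if_neg h] at hx
      have hs : s = a' + 1 := hcond h
      exact ⟨a' + 1, s, q, by omega, hs1, hs2, fun _ => hs, rfl, hx⟩
  · rintro ⟨a, s, q, ha, hs1, hs2, hcond, rfl, hW⟩
    have hy := step hr ha hW
    by_cases h0 : a = 0
    · subst h0
      rw [if_pos rfl] at hy
      exact ⟨r - 1, s, q, le_rfl, hs1, hs2, fun h => absurd rfl h, rfl, hy⟩
    · rw [if_neg h0] at hy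
      have hs : s = a := hcond h0
      exact ⟨a - 1, s, q, by omega, hs1, hs2, fun _ => by omega, rfl, hy⟩

lemma hmap_gmap {r n : ℕ} (hr : 2 ≤ r) (x : ZMod n → ZMod 2) (p : ZMod n) :
    hmap r n (gmap r n x) p = x p := by
  classical
  unfold hmap
  rw [if_congr (flips_iff hr p x) rfl rfl]
  unfold gmap
  rw [add_assoc]
  have : ∀ v : ZMod 2, v + v = 0 := by decide
  rcases Classical.em (Flips r n p x) with h | h
  · rw [if_pos h, this, add_zero]
  · rw [if_neg h, this, add_zero]

lemma gmap_injective {r n : ℕ} (hr : 2 ≤ r) : Function.Injective (gmap r n) := by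
  intro x x' h
  funext p
  rw [← hmap_gmap hr x p, ← hmap_gmap hr x' p, h]

lemma prod_one_iff (s : Finset ℕ) (v : ℕ → ZMod 2) :
    (∏ m ∈ s, v m) = 1 ↔ ∀ m ∈ s, v m = 1 := by
  constructor
  · intro h m hm
    by_contra hne
    have hv0 : v m = 0 := (zm01 (v m)).resolve_right hne
    rw [Finset.prod_eq_zero hm hv0] at h
    exact absurd h (by decide)
  · exact Finset.prod_eq_one

open Classical in
lemma indicator_q {r n : ℕ} (hr : 2 ≤ r) {j : ℕ} (hj1 : 1 ≤ j) (hj2 : j ≤ r - 1)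
    (q : ZMod n) (x : ZMod n → ZMod 2) :
    (x q + 1) * (x (q + ((r + 1 : ℕ) : ZMod n)) + 1) *
      (∏ m ∈ Finset.Icc 1 j, x (q + ((r - j + m : ℕ) : ZMod n))) *
      ((∏ m ∈ Finset.Icc (j + 1) r, (x (q + ((m - j : ℕ) : ZMod n)) + 1)) +
        ∏ m ∈ Finset.Icc (j + 1) r, x (q + ((m - j : ℕ) : ZMod n)))
    = if (W r n (r - j) q x ∨ W r n 0 q x) then 1 else 0 := by
  classical
  have hmul : ∀ u v : ZMod 2, u * v = 1 ↔ u = 1 ∧ v = 1 := by decide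
  have hadd1 : ∀ u : ZMod 2, u + 1 = 1 ↔ u = 0 := by decide
  have hsum1 : ∀ u v : ZMod 2, u + v = 1 ↔ ((u = 1 ∧ ¬ v = 1) ∨ (¬ u = 1 ∧ v = 1)) := by decide
  by_cases hC : W r n (r - j) q x ∨ W r n 0 q x
  · rw [if_pos hC]
    rcases hC with hW | hW
    · obtain ⟨z1, zs1, os1, b1⟩ := hW
      have hP : (∏ m ∈ Finset.Icc 1 j, x (q + ((r - j + m : ℕ) : ZMod n))) = 1 :=
        Finset.prod_eq_one (fun m hm => by
          rw [Finset.mem_Icc] at hm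
          exact os1 (r - j + m) (by rw [Finset.mem_Icc]; omega))
      have hP0 : (∏ m ∈ Finset.Icc (j + 1) r, (x (q + ((m - j : ℕ) : ZMod n)) + 1)) = 1 :=
        Finset.prod_eq_one (fun m hm => by
          rw [Finset.mem_Icc] at hm
          rw [zs1 (m - j) (by rw [Finset.mem_Icc]; omega)]
          decide)
      have hP1 : (∏ m ∈ Finset.Icc (j + 1) r, x (q + ((m - j : ℕ) : ZMod n))) = 0 := by
        apply Finset.prod_eq_zero (i := j + 1) (by rw [Finset.mem_Icc]; omega)
        rw [show j + 1 - j = 1 from by omega]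
        exact zs1 1 (by rw [Finset.mem_Icc]; omega)
      rw [z1, b1, hP, hP0, hP1]
      decide
    · obtain ⟨z1, zs1, os1, b1⟩ := hW
      have hP : (∏ m ∈ Finset.Icc 1 j, x (q + ((r - j + m : ℕ) : ZMod n))) = 1 :=
        Finset.prod_eq_one (fun m hm => by
          rw [Finset.mem_Icc] at hm
          exact os1 (r - j + m) (by rw [Finset.mem_Icc]; omega))
      have hP0 : (∏ m ∈ Finset.Icc (j + 1) r, (x (q + ((m - j : ℕ) : ZMod n)) + 1)) = 0 := by
        apply Finset.prod_eq_zero (i := j + 1) (by rw [Finset.mem_Icc]; omega)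
        rw [show j + 1 - j = 1 from by omega]
        rw [os1 1 (by rw [Finset.mem_Icc]; omega)]
        decide
      have hP1 : (∏ m ∈ Finset.Icc (j + 1) r, x (q + ((m - j : ℕ) : ZMod n))) = 1 :=
        Finset.prod_eq_one (fun m hm => by
          rw [Finset.mem_Icc] at hm
          exact os1 (m - j) (by rw [Finset.mem_Icc]; omega))
      rw [z1, b1, hP, hP0, hP1]
      decide
  · rw [if_neg hC]
    rcases zm01 ((x q + 1) * (x (q + ((r + 1 : ℕ) : ZMod n)) + 1) *
      (∏ m ∈ Finset.Icc 1 j, x (q + ((r - j + m : ℕ) : ZMod n))) *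
      ((∏ m ∈ Finset.Icc (j + 1) r, (x (q + ((m - j : ℕ) : ZMod n)) + 1)) +
        ∏ m ∈ Finset.Icc (j + 1) r, x (q + ((m - j : ℕ) : ZMod n)))) with h | h
    · exact h
    exfalso
    apply hC
    rw [hmul, hmul, hmul] at h
    obtain ⟨⟨⟨hA, hB⟩, hP⟩, hCsum⟩ := h
    rw [hadd1] at hA hB
    rw [prod_one_iff] at hP
    have hones : ∀ t ∈ Finset.Icc (r - j + 1) r, x (q + (t : ZMod n)) = 1 := by
      intro t htm
      rw [Finset.mem_Icc] at htm
      have := hP (t - (r - j)) (by rw [Finset.mem_Icc]; omega)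
      rwa [show r - j + (t - (r - j)) = t from by omega] at this
    rw [hsum1] at hCsum
    rcases hCsum with ⟨h0, _⟩ | ⟨_, h1⟩
    · rw [prod_one_iff] at h0
      left
      refine ⟨hA, ?_, hones, hB⟩
      intro t htm
      rw [Finset.mem_Icc] at htm
      have := h0 (t + j) (by rw [Finset.mem_Icc]; omega)
      rw [hadd1] at this
      rwa [show t + j - j = t from by omega] at this
    · rw [prod_one_iff] at h1
      right
      refine ⟨hA, ?_, ?_, hB⟩
      · intro t htm
        rw [Finset.mem_Icc] at htm
        omega
      · intro t htm
        rw [Finset.mem_Icc] at htm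
        rcases le_or_gt t (r - j) with hle | hlt
        · have := h1 (t + j) (by rw [Finset.mem_Icc]; omega)
          rwa [show t + j - j = t from by omega] at this
        · exact hones t (by rw [Finset.mem_Icc]; omega)
      

lemma sum_indicator_unique (s : Finset ℕ) (C : ℕ → Prop) [DecidablePred C]
    [Decidable (∃ j ∈ s, C j)]
    (h : ∀ j ∈ s, ∀ j' ∈ s, C j → C j' → j = j') :
    (∑ j ∈ s, if C j then (1 : ZMod 2) else 0) = if ∃ j ∈ s, C j then 1 else 0 := by
  by_cases hex : ∃ j ∈ s, C j
  · obtain ⟨j0, hj0, hC0⟩ := hex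
    rw [if_pos ⟨j0, hj0, hC0⟩, Finset.sum_eq_single_of_mem j0 hj0 ?_, if_pos hC0]
    intro b hb hne
    exact if_neg (fun hCb => hne (h b hb j0 hj0 hCb hC0))
  · rw [if_neg hex, Finset.sum_eq_zero]
    intro j hj
    exact if_neg (fun hC => hex ⟨j, hj, hC⟩)

open Classical in
lemma main_eq {r n : ℕ} (hr : 2 ≤ r) (x : ZMod n → ZMod 2) (i : ZMod n) :
    (fun m : ℕ => x (i + (((m - 1) % (2 * r) : ℕ) : ZMod n))) r
      + ∑ j ∈ Finset.Icc 1 (r - 1),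
        ((fun m : ℕ => x (i + (((m - 1) % (2 * r) : ℕ) : ZMod n))) j + 1) *
          ((fun m : ℕ => x (i + (((m - 1) % (2 * r) : ℕ) : ZMod n))) (r + j + 1) + 1) *
          (∏ m ∈ Finset.Icc 1 j, (fun m : ℕ => x (i + (((m - 1) % (2 * r) : ℕ) : ZMod n))) (r + m)) *
          ((∏ m ∈ Finset.Icc (j + 1) r, ((fun m : ℕ => x (i + (((m - 1) % (2 * r) : ℕ) : ZMod n))) m + 1)) +
            ∏ m ∈ Finset.Icc (j + 1) r, (fun m : ℕ => x (i + (((m - 1) % (2 * r) : ℕ) : ZMod n))) m)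
    = gmap r n x (i + ((r - 1 : ℕ) : ZMod n)) := by
  classical
  simp only []
  have hb : ∀ (j c d : ℕ), 1 ≤ j → (j - 1) + c = d → d < 2 * r →
      x (i + ((d % (2 * r) : ℕ) : ZMod n)) = x ((i + ((j - 1 : ℕ) : ZMod n)) + (c : ZMod n)) := by
    intro j c d hj hcd hlt
    rw [Nat.mod_eq_of_lt hlt, ← addshift i (j - 1) c d hcd]
  have hterm : ∀ j ∈ Finset.Icc 1 (r - 1),
      (x (i + (((j - 1) % (2 * r) : ℕ) : ZMod n)) + 1) *
          (x (i + (((r + j + 1 - 1) % (2 * r) : ℕ) : ZMod n)) + 1) *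
          (∏ m ∈ Finset.Icc 1 j, x (i + (((r + m - 1) % (2 * r) : ℕ) : ZMod n))) *
          ((∏ m ∈ Finset.Icc (j + 1) r, (x (i + (((m - 1) % (2 * r) : ℕ) : ZMod n)) + 1)) +
            ∏ m ∈ Finset.Icc (j + 1) r, x (i + (((m - 1) % (2 * r) : ℕ) : ZMod n)))
      = if (W r n (r - j) (i + ((j - 1 : ℕ) : ZMod n)) x ∨ W r n 0 (i + ((j - 1 : ℕ) : ZMod n)) x)
          then 1 else 0 := by
    intro j hj
    rw [Finset.mem_Icc] at hj
    have e1 : x (i + (((j - 1) % (2 * r) : ℕ) : ZMod n)) = x (i + ((j - 1 : ℕ) : ZMod n)) := by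
      rw [Nat.mod_eq_of_lt (by omega)]
    have e2 : x (i + (((r + j + 1 - 1) % (2 * r) : ℕ) : ZMod n))
        = x ((i + ((j - 1 : ℕ) : ZMod n)) + ((r + 1 : ℕ) : ZMod n)) :=
      hb j (r + 1) (r + j + 1 - 1) (by omega) (by omega) (by omega)
    have e3 : (∏ m ∈ Finset.Icc 1 j, x (i + (((r + m - 1) % (2 * r) : ℕ) : ZMod n)))
        = ∏ m ∈ Finset.Icc 1 j, x ((i + ((j - 1 : ℕ) : ZMod n)) + ((r - j + m : ℕ) : ZMod n)) := by
      refine Finset.prod_congr rfl (fun m hm => ?_)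
      rw [Finset.mem_Icc] at hm
      exact hb j (r - j + m) (r + m - 1) (by omega) (by omega) (by omega)
    have e4 : ∀ m ∈ Finset.Icc (j + 1) r, x (i + (((m - 1) % (2 * r) : ℕ) : ZMod n))
        = x ((i + ((j - 1 : ℕ) : ZMod n)) + ((m - j : ℕ) : ZMod n)) := by
      intro m hm
      rw [Finset.mem_Icc] at hm
      exact hb j (m - j) (m - 1) (by omega) (by omega) (by omega)
    have e5 : (∏ m ∈ Finset.Icc (j + 1) r, (x (i + (((m - 1) % (2 * r) : ℕ) : ZMod n)) + 1))
        = ∏ m ∈ Finset.Icc (j + 1) r, (x ((i + ((j - 1 : ℕ) : ZMod n)) + ((m - j : ℕ) : ZMod n)) + 1) :=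
      Finset.prod_congr rfl (fun m hm => by rw [e4 m hm])
    have e6 : (∏ m ∈ Finset.Icc (j + 1) r, x (i + (((m - 1) % (2 * r) : ℕ) : ZMod n)))
        = ∏ m ∈ Finset.Icc (j + 1) r, x ((i + ((j - 1 : ℕ) : ZMod n)) + ((m - j : ℕ) : ZMod n)) :=
      Finset.prod_congr rfl e4
    rw [e1, e2, e3, e5, e6]
    exact indicator_q hr (by omega) (by omega) _ x
  have huniq : ∀ j ∈ Finset.Icc 1 (r - 1), ∀ j' ∈ Finset.Icc 1 (r - 1),
      (W r n (r - j) (i + ((j - 1 : ℕ) : ZMod n)) x ∨ W r n 0 (i + ((j - 1 : ℕ) : ZMod n)) x) →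
      (W r n (r - j') (i + ((j' - 1 : ℕ) : ZMod n)) x ∨ W r n 0 (i + ((j' - 1 : ℕ) : ZMod n)) x) →
      j = j' := by
    intro j hj j' hj' hC hC'
    rw [Finset.mem_Icc] at hj hj'
    by_contra hne
    have hblk : ∀ jj, 1 ≤ jj → jj ≤ r - 1 →
        (W r n (r - jj) (i + ((jj - 1 : ℕ) : ZMod n)) x ∨ W r n 0 (i + ((jj - 1 : ℕ) : ZMod n)) x) →
        ∃ a, a ≤ r - 1 ∧ W r n a (i + ((jj - 1 : ℕ) : ZMod n)) x := by
      rintro jj h1 h2 (h | h)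
      · exact ⟨r - jj, by omega, h⟩
      · exact ⟨0, by omega, h⟩
    obtain ⟨a1, ha1, hW1⟩ := hblk j hj.1 hj.2 hC
    obtain ⟨a2, ha2, hW2⟩ := hblk j' hj'.1 hj'.2 hC'
    have hrel : (i + ((j' - 1 : ℕ) : ZMod n)) + ((r - j' : ℕ) : ZMod n)
        = (i + ((j - 1 : ℕ) : ZMod n)) + ((r - j : ℕ) : ZMod n) := by
      rw [addshift i (j' - 1) (r - j') (r - 1) (by omega),
        addshift i (j - 1) (r - j) (r - 1) (by omega)]
    rcases rel hrel with ⟨hle, heq⟩ | ⟨hlt, heq⟩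
    · rcases Nat.eq_zero_or_pos ((r - j) - (r - j')) with hz | hpos
      · omega
      · exact master hr ha1 ha2 hpos (by omega) heq hW1 hW2
    · exact master hr ha2 ha1 (by omega) (by omega) heq hW2 hW1
  have hS : (∑ j ∈ Finset.Icc 1 (r - 1),
      if (W r n (r - j) (i + ((j - 1 : ℕ) : ZMod n)) x ∨ W r n 0 (i + ((j - 1 : ℕ) : ZMod n)) x)
        then (1 : ZMod 2) else 0)
      = if (∃ j ∈ Finset.Icc 1 (r - 1),
          (W r n (r - j) (i + ((j - 1 : ℕ) : ZMod n)) x ∨ W r n 0 (i + ((j - 1 : ℕ) : ZMod n)) x))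
        then 1 else 0 :=
    by exact sum_indicator_unique _ _ huniq
  have hiff : (∃ j ∈ Finset.Icc 1 (r - 1),
      (W r n (r - j) (i + ((j - 1 : ℕ) : ZMod n)) x ∨ W r n 0 (i + ((j - 1 : ℕ) : ZMod n)) x))
      ↔ Flips r n (i + ((r - 1 : ℕ) : ZMod n)) x := by
    constructor
    · rintro ⟨j, hj, hC⟩
      rw [Finset.mem_Icc] at hj
      have hpos : (i + ((j - 1 : ℕ) : ZMod n)) + ((r - j : ℕ) : ZMod n)
          = i + ((r - 1 : ℕ) : ZMod n) := addshift i (j - 1) (r - j) (r - 1) (by omega)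
      rcases hC with hW | hW
      · exact ⟨r - j, r - j, i + ((j - 1 : ℕ) : ZMod n), by omega, by omega, by omega,
          fun _ => rfl, hpos.symm, hW⟩
      · exact ⟨0, r - j, i + ((j - 1 : ℕ) : ZMod n), by omega, by omega, by omega,
          fun h => absurd rfl h, hpos.symm, hW⟩
    · rintro ⟨a, s, q, ha, hs1, hs2, hcond, hp, hW⟩
      refine ⟨r - s, by rw [Finset.mem_Icc]; omega, ?_⟩
      have h1 : (i + ((r - s - 1 : ℕ) : ZMod n)) + (s : ZMod n) = i + ((r - 1 : ℕ) : ZMod n) :=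
        addshift i (r - s - 1) s (r - 1) (by omega)
      have hq : q = i + ((r - s - 1 : ℕ) : ZMod n) := by
        have h2 : q + (s : ZMod n) = (i + ((r - s - 1 : ℕ) : ZMod n)) + (s : ZMod n) := by
          rw [h1, ← hp]
        exact add_right_cancel h2
      by_cases h0 : a = 0
      · right
        rw [show r - s - 1 = (r - s) - 1 from rfl] at hq
        rw [← hq]
        rwa [h0] at hW
      · left
        have hs : s = a := hcond h0
        rw [show r - (r - s) = a from by omega, ← hq]
        exact hW
  rw [Finset.sum_congr rfl hterm, hS, if_congr hiff rfl rfl,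
    Nat.mod_eq_of_lt (show r - 1 < 2 * r by omega)]
  rfl

end S13



/-- for every `r ≥ 2`, the Boolean function `f : F_2^{2r} → F_2` given
(with 1-based indices, realized below through `y m = x_m`) by
`f(x) = x_r ⊕ Σ_{j=1}^{r-1} (x_j ⊕ 1)(x_{r+j+1} ⊕ 1)(∏_{m=1}^{j} x_{r+m})
(∏_{m=j+1}^{r} (x_m ⊕ 1) ⊕ ∏_{m=j+1}^{r} x_m)` is a `(2r,n)`-lifting for
every `n ≥ 2r`. -/
theorem stmt13 (r : ℕ) (hr : 2 ≤ r) :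
    ∀ n, 2 * r ≤ n → Function.Bijective (induced (2 * r) n
      (fun x =>
        let y : ℕ → ZMod 2 := fun m => x ⟨(m - 1) % (2 * r), Nat.mod_lt _ (by omega)⟩
        y r + ∑ j ∈ Finset.Icc 1 (r - 1),
          (y j + 1) * (y (r + j + 1) + 1) * (∏ m ∈ Finset.Icc 1 j, y (r + m)) *
            ((∏ m ∈ Finset.Icc (j + 1) r, (y m + 1)) +
              ∏ m ∈ Finset.Icc (j + 1) r, y m))) := by
  intro n hn
  classical
  haveI : NeZero n := ⟨by omega⟩
  have hkey : induced (2 * r) n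
      (fun x =>
        let y : ℕ → ZMod 2 := fun m => x ⟨(m - 1) % (2 * r), Nat.mod_lt _ (by omega)⟩
        y r + ∑ j ∈ Finset.Icc 1 (r - 1),
          (y j + 1) * (y (r + j + 1) + 1) * (∏ m ∈ Finset.Icc 1 j, y (r + m)) *
            ((∏ m ∈ Finset.Icc (j + 1) r, (y m + 1)) +
              ∏ m ∈ Finset.Icc (j + 1) r, y m))
      = (fun (z : ZMod n → ZMod 2) (i : ZMod n) => z (i + ((r - 1 : ℕ) : ZMod n)))
          ∘ S13.gmap r n := by
    funext x i
    show (fun m : ℕ => x (i + (((m - 1) % (2 * r) : ℕ) : ZMod n))) r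
        + ∑ j ∈ Finset.Icc 1 (r - 1),
          ((fun m : ℕ => x (i + (((m - 1) % (2 * r) : ℕ) : ZMod n))) j + 1) *
            ((fun m : ℕ => x (i + (((m - 1) % (2 * r) : ℕ) : ZMod n))) (r + j + 1) + 1) *
            (∏ m ∈ Finset.Icc 1 j, (fun m : ℕ => x (i + (((m - 1) % (2 * r) : ℕ) : ZMod n))) (r + m)) *
            ((∏ m ∈ Finset.Icc (j + 1) r, ((fun m : ℕ => x (i + (((m - 1) % (2 * r) : ℕ) : ZMod n))) m + 1)) +
              ∏ m ∈ Finset.Icc (j + 1) r, (fun m : ℕ => x (i + (((m - 1) % (2 * r) : ℕ) : ZMod n))) m)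
        = S13.gmap r n x (i + ((r - 1 : ℕ) : ZMod n))
    exact S13.main_eq hr x i
  rw [hkey]
  refine Function.Bijective.comp ?_ ?_
  · constructor
    · intro z z' h
      funext w
      have h2 := congrFun h (w - ((r - 1 : ℕ) : ZMod n))
      simpa [sub_add_cancel] using h2
    · intro z
      refine ⟨fun w => z (w - ((r - 1 : ℕ) : ZMod n)), ?_⟩
      funext w
      simp [add_sub_cancel_right]
  · exact Finite.injective_iff_bijective.mp (S13.gmap_injective hr)
end

section
/- Let r ≥ 2 be an integer and let n ≥ 2r. Define F : F_2^n → F_2^n by F(x)_i = x_i ⊕ Σ_{j=1}^{r−1} (x_{i−r+j} ⊕ 1)(x_{i+j+1} ⊕ 1) (∏_{k=1}^{j} x_{i+k}) (∏_{k=j+1}^{r} (x_{i−r+k} ⊕ 1) ⊕ ∏_{k=j+1}^{r} x_{i−r+k}), with indices modulo n. Then the r-fold iterate of F is the identity: F^{(r)}(x) = x for all x ∈ F_2^n. -/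
namespace Stmt14

/-- `e` is the right end of a cycling run of length `ℓ` in `x`. -/
def Cyc (r : ℕ) {n : ℕ} (x : ZMod n → ZMod 2) (e : ZMod n) (ℓ : ℕ) : Prop :=
  1 ≤ ℓ ∧ ℓ ≤ r ∧ x (e + 1) = 0 ∧ (∀ k < ℓ, x (e - (k : ℕ)) = 1) ∧
    (∀ k, ℓ ≤ k → k ≤ r → x (e - (k : ℕ)) = 0)

def InZone (r : ℕ) {n : ℕ} (x : ZMod n → ZMod 2) (i : ZMod n) : Prop :=
  ∃ e ℓ k, Cyc r x e ℓ ∧ k < r ∧ i = e - (k : ℕ)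

def phase (r ℓ t : ℕ) : ℕ := (ℓ - 1 + t) % r + 1

open Classical in
noncomputable def Conf (r : ℕ) {n : ℕ} (x : ZMod n → ZMod 2) (t : ℕ) (i : ZMod n) : ZMod 2 :=
  if InZone r x i then
    (if ∃ e ℓ k, Cyc r x e ℓ ∧ k < r ∧ i = e - (k : ℕ) ∧ k < phase r ℓ t then 1 else 0)
  else x i

section
variable {r n : ℕ} {x : ZMod n → ZMod 2}

lemma zmod2_cases (a : ZMod 2) : a = 0 ∨ a = 1 := by revert a; decide

lemma cast_inj (hn : 0 < n) {a b : ℕ} (ha : a < n) (hb : b < n)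
    (h : (a : ZMod n) = b) : a = b := by
  haveI : NeZero n := ⟨hn.ne'⟩
  have := congrArg ZMod.val h
  rwa [ZMod.val_natCast_of_lt ha, ZMod.val_natCast_of_lt hb] at this

lemma shift_sub {e : ZMod n} {u v : ℕ} (h : v ≤ u) :
    e - (u : ℕ) + (v : ℕ) = e - ((u - v : ℕ) : ZMod n) := by
  have : ((u - v : ℕ) : ZMod n) = (u : ℕ) - (v : ℕ) := by push_cast [h]; ring
  rw [this]; ring

/-- Separation: two cycling ends can't be at distance `1..r`. -/
lemma sep (hr : 2 ≤ r) (hn : 2 * r ≤ n) {e e' : ZMod n} {ℓ ℓ' d : ℕ}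
    (hc : Cyc r x e ℓ) (hc' : Cyc r x e' ℓ') (hd1 : 1 ≤ d) (hdr : d ≤ r)
    (he : e' = e + (d : ℕ)) : False := by
  obtain ⟨hl1, hlr, hE1, hOne, hZero⟩ := hc
  obtain ⟨hl1', hlr', hE1', hOne', hZero'⟩ := hc'
  have he2 : e = e' - (d : ℕ) := by rw [he]; ring
  by_cases hcase : ℓ' ≤ d
  · -- x e = 0 from Cyc e', but x e = 1 from Cyc e
    have h0 : x (e' - (d : ℕ)) = 0 := hZero' d hcase hdr
    have h1 : x (e - (0 : ℕ)) = 1 := hOne 0 (by omega)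
    simp only [Nat.cast_zero, sub_zero] at h1
    rw [← he2, h1] at h0
    exact one_ne_zero h0
  · push_neg at hcase
    have h1 : x (e' - ((d - 1 : ℕ) : ℕ)) = 1 := hOne' (d - 1) (by omega)
    have hpos : e' - ((d - 1 : ℕ) : ZMod n) = e + 1 := by
      rw [he]
      have : ((d - 1 : ℕ) : ZMod n) = (d : ℕ) - 1 := by push_cast [hd1]; ring
      rw [this]; ring
    rw [hpos] at h1
    rw [hE1] at h1
    exact zero_ne_one h1

lemma ell_unique {e : ZMod n} {ℓ ℓ' : ℕ} (hc : Cyc r x e ℓ) (hc' : Cyc r x e ℓ') :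
    ℓ = ℓ' := by
  by_contra h
  rcases Nat.lt_or_ge ℓ ℓ' with hlt | hge
  · have h1 := hc'.2.2.2.1 ℓ hlt
    have h0 := hc.2.2.2.2 ℓ le_rfl hc.2.1
    rw [h1] at h0; exact one_ne_zero h0
  · have hlt : ℓ' < ℓ := lt_of_le_of_ne hge (Ne.symm h)
    have h1 := hc.2.2.2.1 ℓ' hlt
    have h0 := hc'.2.2.2.2 ℓ' le_rfl hc'.2.1
    rw [h1] at h0; exact one_ne_zero h0

lemma shift_add {e : ZMod n} {u v : ℕ} (h : u ≤ v) :
    e - (u : ℕ) + (v : ℕ) = e + ((v - u : ℕ) : ZMod n) := by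
  have : ((v - u : ℕ) : ZMod n) = (v : ℕ) - (u : ℕ) := by push_cast [h]; ring
  rw [this]; ring

lemma zone_unique (hr : 2 ≤ r) (hn : 2 * r ≤ n) {e e' : ZMod n} {ℓ ℓ' k k' : ℕ}
    (hc : Cyc r x e ℓ) (hc' : Cyc r x e' ℓ') (hk : k < r) (hk' : k' < r)
    (h : e - (k : ℕ) = e' - (k' : ℕ)) : e = e' ∧ ℓ = ℓ' ∧ k = k' := by
  have hn0 : 0 < n := by omega
  have heq : e = e' := by
    rcases le_or_gt k k' with hle | hlt
    · have he' : e' = e + ((k' - k : ℕ) : ZMod n) := by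
        rw [← shift_add hle, h]; ring
      rcases Nat.eq_or_lt_of_le hle with hEq | hlt2
      · subst hEq; simpa using he'.symm
      · exact absurd he' (fun he' => sep hr hn hc hc' (by omega) (by omega) he')
    · have he : e = e' + ((k - k' : ℕ) : ZMod n) := by
        rw [← shift_add hlt.le, ← h]; ring
      exact absurd he (fun he => sep hr hn hc' hc (by omega) (by omega) he)
  subst heq
  rw [sub_right_inj] at h
  have hkk : k = k' := cast_inj hn0 (by omega) (by omega) h
  exact ⟨rfl, ell_unique hc hc', hkk⟩

open Classical in
lemma conf_zone (hr : 2 ≤ r) (hn : 2 * r ≤ n) {e : ZMod n} {ℓ k : ℕ}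
    (hc : Cyc r x e ℓ) (hk : k < r) (t : ℕ) :
    Conf r x t (e - (k : ℕ)) = if k < phase r ℓ t then 1 else 0 := by
  have h : InZone r x (e - (k : ℕ)) := ⟨e, ℓ, k, hc, hk, rfl⟩
  rw [Conf, if_pos h]
  by_cases hc2 : k < phase r ℓ t
  · rw [if_pos ⟨e, ℓ, k, hc, hk, rfl, hc2⟩, if_pos hc2]
  · rw [if_neg ?_, if_neg hc2]
    rintro ⟨e', ℓ', k', hc', hk', hi', hp'⟩
    obtain ⟨he, hl, hkk⟩ := zone_unique hr hn hc hc' hk hk' hi'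
    subst hl; subst hkk
    exact hc2 hp'

lemma conf_frozen {i : ZMod n} (h : ¬ InZone r x i) (t : ℕ) :
    Conf r x t i = x i := if_neg h

lemma phase_pos {ℓ t : ℕ} : 1 ≤ phase r ℓ t := Nat.le_add_left 1 _

lemma phase_le (hr : 1 ≤ r) {ℓ t : ℕ} : phase r ℓ t ≤ r := by
  have := Nat.mod_lt (ℓ - 1 + t) (show 0 < r by omega)
  unfold phase; omega

lemma phase_zero (hr : 1 ≤ r) {ℓ : ℕ} (h1 : 1 ≤ ℓ) (h2 : ℓ ≤ r) : phase r ℓ 0 = ℓ := by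
  unfold phase
  rw [Nat.add_zero, Nat.mod_eq_of_lt (by omega)]
  omega

lemma phase_r (hr : 1 ≤ r) {ℓ : ℕ} (h1 : 1 ≤ ℓ) (h2 : ℓ ≤ r) : phase r ℓ r = ℓ := by
  unfold phase
  rw [Nat.add_mod_right, Nat.mod_eq_of_lt (by omega)]
  omega

lemma phase_succ (hr : 1 ≤ r) {ℓ t : ℕ} :
    phase r ℓ (t + 1) = if phase r ℓ t = r then 1 else phase r ℓ t + 1 := by
  unfold phase
  have h0 : 0 < r := by omega
  have hm := Nat.mod_lt (ℓ - 1 + t) h0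
  by_cases h : (ℓ - 1 + t) % r = r - 1
  · rw [if_pos (by omega)]
    rw [← Nat.add_assoc]
    rw [Nat.add_mod, h]
    simp [Nat.sub_add_cancel (show 1 ≤ r by omega)]
  · rw [if_neg (by omega)]
    rw [← Nat.add_assoc]
    rw [Nat.add_mod, Nat.mod_eq_of_lt (show (ℓ-1+t) % r + 1 % r < r by
      rcases Nat.eq_or_lt_of_le (show 1 ≤ r from hr) with h1 | h1
      · omega
      · rw [Nat.mod_eq_of_lt h1]; omega)]
    rcases Nat.eq_or_lt_of_le (show 1 ≤ r from hr) with h1 | h1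
    · omega
    · rw [Nat.mod_eq_of_lt h1]

lemma not_inzone_e1 (hr : 2 ≤ r) (hn : 2 * r ≤ n) {e : ZMod n} {ℓ : ℕ}
    (hc : Cyc r x e ℓ) : ¬ InZone r x (e + 1) := by
  rintro ⟨e', ℓ', k', hc', hk', hi'⟩
  have he' : e' = e + ((k' + 1 : ℕ) : ZMod n) := by
    have : e' = e + 1 + (k' : ℕ) := by rw [hi']; ring
    rw [this]; push_cast; ring
  exact sep hr hn hc hc' (by omega) (by omega) he'

lemma conf_e1 (hr : 2 ≤ r) (hn : 2 * r ≤ n) {e : ZMod n} {ℓ : ℕ}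
    (hc : Cyc r x e ℓ) (t : ℕ) : Conf r x t (e + 1) = 0 := by
  rw [conf_frozen (not_inzone_e1 hr hn hc) t]
  exact hc.2.2.1

lemma not_inzone_er (hr : 2 ≤ r) (hn : 2 * r ≤ n) {e : ZMod n} {ℓ : ℕ}
    (hc : Cyc r x e ℓ) : ¬ InZone r x (e - (r : ℕ)) := by
  rintro ⟨e', ℓ', k', hc', hk', hi'⟩
  have he : e = e' + ((r - k' : ℕ) : ZMod n) := by
    have h1 : e' = e - ((r - k' : ℕ) : ZMod n) := by
      rw [← shift_sub (le_of_lt hk')]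
      rw [hi']; ring
    rw [h1]; ring
  exact sep hr hn hc' hc (by omega) (by omega) he

lemma conf_er (hr : 2 ≤ r) (hn : 2 * r ≤ n) {e : ZMod n} {ℓ : ℕ}
    (hc : Cyc r x e ℓ) (t : ℕ) : Conf r x t (e - (r : ℕ)) = 0 := by
  rw [conf_frozen (not_inzone_er hr hn hc) t]
  exact hc.2.2.2.2 r hc.2.1 le_rfl

lemma conf_end (hr : 2 ≤ r) (hn : 2 * r ≤ n) {e : ZMod n} {ℓ : ℕ}
    (hc : Cyc r x e ℓ) (t : ℕ) : Conf r x t e = 1 := by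
  have h := conf_zone hr hn hc (show 0 < r by omega) t
  simp only [Nat.cast_zero, sub_zero] at h
  rw [h, if_pos (by have := @phase_pos r ℓ t; omega)]

lemma zmod2_ne_zero {a : ZMod 2} (h : a ≠ 0) : a = 1 := (zmod2_cases a).resolve_left h

lemma zmod2_add_one_ne_zero {a : ZMod 2} (h : a + 1 ≠ 0) : a = 0 := by
  rcases zmod2_cases a with h0 | h1
  · exact h0
  · subst h1; exact absurd rfl h

/-- If around `i` we see (in `Conf t`) the pattern of a cycling run with right end `E`,
length `L`, and `i = E - j` inside its zone, then `i` is in a zone. -/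
lemma frozen_transfer (hr : 2 ≤ r) (hn : 2 * r ≤ n) (t : ℕ) {i E : ZMod n} {j L : ℕ}
    (hj1 : 1 ≤ j) (hjr : j ≤ r - 1) (hjL : j ≤ L) (hL1 : 1 ≤ L) (hL : L ≤ r)
    (hiE : i = E - (j : ℕ))
    (hOne : ∀ d < L, Conf r x t (E - (d : ℕ)) = 1)
    (hZero : ∀ d, L ≤ d → d ≤ r → Conf r x t (E - (d : ℕ)) = 0)
    (hE1 : Conf r x t (E + 1) = 0) : InZone r x i := by
  have hyE : Conf r x t E = 1 := by
    have h := hOne 0 (by omega)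
    rwa [Nat.cast_zero, sub_zero] at h
  by_cases hEz : InZone r x E
  · obtain ⟨e, ℓ, k₀, hc, hk₀, hEe⟩ := hEz
    rcases Nat.eq_zero_or_pos k₀ with h0 | h1
    · subst h0
      simp only [Nat.cast_zero, sub_zero] at hEe
      exact ⟨e, ℓ, j, hc, by omega, by rw [hiE, hEe]⟩
    · exfalso
      have hk0p : k₀ < phase r ℓ t := by
        have h2 := conf_zone hr hn hc hk₀ t
        rw [← hEe, hyE] at h2
        by_contra hcon
        rw [if_neg hcon] at h2
        exact one_ne_zero h2
      have hpos : E + 1 = e - ((k₀ - 1 : ℕ) : ZMod n) := by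
        rw [hEe, ← shift_sub (show 1 ≤ k₀ by omega)]
        push_cast; ring
      have h3 := conf_zone hr hn hc (show k₀ - 1 < r by omega) t
      rw [← hpos, hE1, if_pos (by omega)] at h3
      exact zero_ne_one h3
  · -- E is frozen; transfer the pattern to x and build a cycling run
    have hfz : ∀ d, 1 ≤ d → d ≤ r → ¬ InZone r x (E - (d : ℕ)) := by
      rintro d hd1 hdr ⟨e, ℓ, k₂, hc, hk₂, hEd⟩
      rcases le_or_gt d k₂ with hle | hlt
      · refine hEz ⟨e, ℓ, k₂ - d, hc, by omega, ?_⟩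
        have : E = E - (d : ℕ) + (d : ℕ) := by ring
        rw [this, hEd, shift_sub hle]
      · have he : e = E - ((d - k₂ : ℕ) : ZMod n) := by
          have : e = e - (k₂ : ℕ) + (k₂ : ℕ) := by ring
          rw [this, ← hEd, shift_sub (le_of_lt hlt)]
        set u := d - k₂ with hu
        rcases lt_or_ge u L with hltL | hgeL
        · have h4 := conf_e1 hr hn hc t
          have hpos : e + 1 = E - ((u - 1 : ℕ) : ZMod n) := by
            rw [he, ← shift_sub (show 1 ≤ u by omega)]
            push_cast; ring
          rw [hpos, hOne (u - 1) (by omega)] at h4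
          exact one_ne_zero h4
        · have h4 := conf_end hr hn hc t
          rw [he, hZero u hgeL (by omega)] at h4
          exact zero_ne_one h4
    have xvals : ∀ d ≤ r, x (E - (d : ℕ)) = Conf r x t (E - (d : ℕ)) := by
      intro d hd
      rcases Nat.eq_zero_or_pos d with h0 | h1
      · subst h0; simp only [Nat.cast_zero, sub_zero]
        exact (conf_frozen hEz t).symm
      · exact (conf_frozen (hfz d h1 hd) t).symm
    have hE1z : ¬ InZone r x (E + 1) := by
      rintro ⟨e, ℓ, k₂, hc, hk₂, hE1e⟩
      rcases Nat.lt_or_ge (k₂ + 1) r with hlt | hge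
      · refine hEz ⟨e, ℓ, k₂ + 1, hc, hlt, ?_⟩
        have : E = E + 1 - 1 := by ring
        rw [this, hE1e]
        push_cast; ring
      · have hk2 : k₂ = r - 1 := by omega
        have he : e = E + (r : ℕ) := by
          have : e = e - (k₂ : ℕ) + (k₂ : ℕ) := by ring
          rw [this, ← hE1e, hk2]
          have : ((r - 1 : ℕ) : ZMod n) = (r : ℕ) - 1 := by
            push_cast [show 1 ≤ r by omega]; ring
          rw [this]; ring
        have h5 := hc.2.2.2.2 r hc.2.1 le_rfl
        have : e - (r : ℕ) = E := by rw [he]; ring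
        rw [this] at h5
        have h6 := xvals 0 (by omega)
        simp only [Nat.cast_zero, sub_zero] at h6
        rw [h6, hyE] at h5
        exact one_ne_zero h5
    have hxE1 : x (E + 1) = 0 := by rw [conf_frozen hE1z t] at hE1; exact hE1
    have hcyc : Cyc r x E L :=
      ⟨hL1, hL, hxE1,
        fun k hk => by rw [xvals k (by omega)]; exact hOne k hk,
        fun k hk1 hk2 => by rw [xvals k hk2]; exact hZero k hk1 hk2⟩
    exact ⟨E, L, j, hcyc, by omega, hiE⟩

end

/-- The local update sum in the theorem. -/
def S (r : ℕ) {n : ℕ} (y : ZMod n → ZMod 2) (i : ZMod n) : ZMod 2 :=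
  ∑ j ∈ Finset.Icc 1 (r - 1),
    (y (i - (r : ZMod n) + (j : ZMod n)) + 1) * (y (i + (j : ZMod n) + 1) + 1) *
      (∏ m ∈ Finset.Icc 1 j, y (i + (m : ZMod n))) *
      ((∏ m ∈ Finset.Icc (j + 1) r, (y (i - (r : ZMod n) + (m : ZMod n)) + 1)) +
        ∏ m ∈ Finset.Icc (j + 1) r, y (i - (r : ZMod n) + (m : ZMod n)))

section
variable {r n : ℕ} {x : ZMod n → ZMod 2}

lemma step_frozen (hr : 2 ≤ r) (hn : 2 * r ≤ n) (t : ℕ) {i : ZMod n}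
    (h : ¬ InZone r x i) : S r (Conf r x t) i = 0 := by
  haveI : Fact (Nat.Prime 2) := ⟨Nat.prime_two⟩
  apply Finset.sum_eq_zero
  intro j hj
  rw [Finset.mem_Icc] at hj
  obtain ⟨hj1, hjr⟩ := hj
  by_contra hne
  set y := Conf r x t with hy
  have h1 := mul_ne_zero_iff.mp hne
  have h2 := mul_ne_zero_iff.mp h1.1
  have h3 := mul_ne_zero_iff.mp h2.1
  obtain ⟨hA, hB⟩ := h3
  have hC := h2.2
  have hD := h1.2
  have hA0 : y (i - (r : ZMod n) + (j : ZMod n)) = 0 := zmod2_add_one_ne_zero hA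
  have hB0 : y (i + (j : ZMod n) + 1) = 0 := zmod2_add_one_ne_zero hB
  have hC1 : ∀ m ∈ Finset.Icc 1 j, y (i + (m : ZMod n)) = 1 :=
    fun m hm => zmod2_ne_zero (Finset.prod_ne_zero_iff.mp hC m hm)
  set E := i + ((j : ℕ) : ZMod n) with hE
  have hiE : i = E - ((j : ℕ) : ZMod n) := by rw [hE]; ring
  have p2 : ∀ m, 1 ≤ m → m ≤ j → i + ((m : ℕ) : ZMod n) = E - ((j - m : ℕ) : ZMod n) := by
    intro m hm1 hm2
    rw [hE]
    have : ((j - m : ℕ) : ZMod n) = ((j : ℕ) : ZMod n) - m := by push_cast [hm2]; ring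
    rw [this]; ring
  have p3 : ∀ m, m ≤ r →
      i - ((r : ℕ) : ZMod n) + ((m : ℕ) : ZMod n) = E - ((j + r - m : ℕ) : ZMod n) := by
    intro m hm
    rw [hE]
    have : ((j + r - m : ℕ) : ZMod n) = ((j : ℕ) : ZMod n) + r - m := by
      push_cast [show m ≤ j + r by omega]; ring
    rw [this]; ring
  have hrun : ∀ d, d < j → y (E - ((d : ℕ) : ZMod n)) = 1 := by
    intro d hd
    have hm := hC1 (j - d) (Finset.mem_Icc.mpr ⟨by omega, by omega⟩)
    rw [p2 (j - d) (by omega) (by omega)] at hm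
    rwa [show j - (j - d) = d by omega] at hm
  have hEr : y (E - ((r : ℕ) : ZMod n)) = 0 := by
    have := hA0
    rw [p3 j (by omega), show j + r - j = r by omega] at this
    exact this
  have hE1 : y (E + 1) = 0 := hB0
  by_cases hD1 : (∏ m ∈ Finset.Icc (j + 1) r,
      (y (i - (r : ZMod n) + (m : ZMod n)) + 1)) = 0
  · -- tail is all ones
    have hD2 : (∏ m ∈ Finset.Icc (j + 1) r, y (i - (r : ZMod n) + (m : ZMod n))) ≠ 0 := by
      intro h2
      exact hD (by rw [hD1, h2, add_zero])
    have hOneTail : ∀ m ∈ Finset.Icc (j + 1) r, y (i - (r : ZMod n) + (m : ZMod n)) = 1 :=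
      fun m hm => zmod2_ne_zero (Finset.prod_ne_zero_iff.mp hD2 m hm)
    have hOne : ∀ d, d < r → y (E - ((d : ℕ) : ZMod n)) = 1 := by
      intro d hd
      rcases Nat.lt_or_ge d j with hlt | hge
      · exact hrun d hlt
      · have hm := hOneTail (j + r - d) (Finset.mem_Icc.mpr ⟨by omega, by omega⟩)
        rw [p3 (j + r - d) (by omega), show j + r - (j + r - d) = d by omega] at hm
        exact hm
    have hZero : ∀ d, r ≤ d → d ≤ r → y (E - ((d : ℕ) : ZMod n)) = 0 := by
      intro d hd1 hd2
      rw [show d = r by omega]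
      exact hEr
    exact h (frozen_transfer hr hn t hj1 hjr (by omega) (by omega) le_rfl hiE hOne hZero hE1)
  · -- tail is all zeros
    have hZeroTail : ∀ m ∈ Finset.Icc (j + 1) r, y (i - (r : ZMod n) + (m : ZMod n)) = 0 :=
      fun m hm => zmod2_add_one_ne_zero (Finset.prod_ne_zero_iff.mp hD1 m hm)
    have hZero : ∀ d, j ≤ d → d ≤ r → y (E - ((d : ℕ) : ZMod n)) = 0 := by
      intro d hd1 hd2
      rcases Nat.eq_or_lt_of_le hd2 with he | hlt
      · rw [he]; exact hEr
      · have hm := hZeroTail (j + r - d) (Finset.mem_Icc.mpr ⟨by omega, by omega⟩)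
        rw [p3 (j + r - d) (by omega), show j + r - (j + r - d) = d by omega] at hm
        exact hm
    exact h (frozen_transfer hr hn t hj1 hjr le_rfl (by omega) (by omega) hiE hrun hZero hE1)

lemma one_add_one_zmod2 : (1 : ZMod 2) + 1 = 0 := by decide

lemma step_zone (hr : 2 ≤ r) (hn : 2 * r ≤ n) (t : ℕ) {e : ZMod n} {ℓ k : ℕ}
    (hc : Cyc r x e ℓ) (hk : k < r) :
    Conf r x t (e - (k : ℕ)) + S r (Conf r x t) (e - (k : ℕ))
      = Conf r x (t + 1) (e - (k : ℕ)) := by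
  set y := Conf r x t with hy
  set i := e - ((k : ℕ) : ZMod n) with hi
  set p := phase r ℓ t with hp
  have hp1 : 1 ≤ p := phase_pos
  have hpr : p ≤ r := phase_le (by omega)
  have hyz : ∀ k' , k' < r → y (e - ((k' : ℕ) : ZMod n)) = if k' < p then 1 else 0 :=
    fun k' hk' => conf_zone hr hn hc hk' t
  have hye1 : y (e + 1) = 0 := conf_e1 hr hn hc t
  have hyer : y (e - ((r : ℕ) : ZMod n)) = 0 := conf_er hr hn hc t
  have q1 : ∀ m, m ≤ k → i + ((m : ℕ) : ZMod n) = e - ((k - m : ℕ) : ZMod n) := by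
    intro m hm
    rw [hi, shift_sub hm]
  have q2 : i + (((k + 1 : ℕ)) : ZMod n) = e + 1 := by
    rw [hi, shift_add (Nat.le_succ k), show k + 1 - k = 1 by omega, Nat.cast_one]
  have q3 : ∀ m, m ≤ r →
      i - ((r : ℕ) : ZMod n) + ((m : ℕ) : ZMod n) = e - ((k + r - m : ℕ) : ZMod n) := by
    intro m hm
    have h0 : i - ((r : ℕ) : ZMod n) = e - (((k + r : ℕ)) : ZMod n) := by
      rw [hi]; push_cast; ring
    rw [h0, shift_sub (show m ≤ k + r by omega)]
  have q4 : i + ((k : ℕ) : ZMod n) + 1 = e + 1 := by rw [hi]; ring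
  have hLHS : y i = if k < p then 1 else 0 := hyz k hk
  have hRHS : Conf r x (t + 1) i = if k < phase r ℓ (t + 1) then 1 else 0 :=
    conf_zone hr hn hc hk (t + 1)
  have hps : phase r ℓ (t + 1) = if p = r then 1 else p + 1 := phase_succ (by omega)
  rcases Nat.eq_zero_or_pos k with hk0 | hk1
  · -- k = 0 : right end; nothing fires
    have hS : S r y i = 0 := by
      apply Finset.sum_eq_zero
      intro j hj
      rw [Finset.mem_Icc] at hj
      have hC0 : (∏ m ∈ Finset.Icc 1 j, y (i + (m : ZMod n))) = 0 := by
        apply Finset.prod_eq_zero (Finset.mem_Icc.mpr ⟨le_rfl, hj.1⟩)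
        rw [show ((1 : ℕ) : ZMod n) = (((k + 1 : ℕ)) : ZMod n) by rw [hk0], q2]
        exact hye1
      rw [hC0, mul_zero, zero_mul]
    rw [hS, add_zero, hLHS, hRHS, if_pos (by omega), if_pos ?_]
    have := phase_pos (r := r) (ℓ := ℓ) (t := t + 1)
    omega
  · rcases Nat.lt_or_ge p k with hpk | hkp
    · -- k > p : dead zero cell; nothing fires
      have hS : S r y i = 0 := by
        apply Finset.sum_eq_zero
        intro j hj
        rw [Finset.mem_Icc] at hj
        have hC0 : (∏ m ∈ Finset.Icc 1 j, y (i + (m : ZMod n))) = 0 := by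
          apply Finset.prod_eq_zero (Finset.mem_Icc.mpr ⟨le_rfl, hj.1⟩)
          rw [show ((1 : ℕ) : ZMod n) = (((1 : ℕ)) : ZMod n) from rfl, q1 1 (by omega),
            hyz (k - 1) (by omega), if_neg (by omega)]
        rw [hC0, mul_zero, zero_mul]
      rw [hS, add_zero, hLHS, hRHS, if_neg (by omega), if_neg ?_]
      rw [hps, if_neg (by omega)]
      omega
    · -- 1 ≤ k ≤ p : the j = k term may fire
      have hkIcc : k ∈ Finset.Icc 1 (r - 1) := Finset.mem_Icc.mpr ⟨hk1, by omega⟩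
      have hS : S r y i =
          (y (i - (r : ZMod n) + (k : ZMod n)) + 1) * (y (i + (k : ZMod n) + 1) + 1) *
            (∏ m ∈ Finset.Icc 1 k, y (i + (m : ZMod n))) *
            ((∏ m ∈ Finset.Icc (k + 1) r, (y (i - (r : ZMod n) + (m : ZMod n)) + 1)) +
              ∏ m ∈ Finset.Icc (k + 1) r, y (i - (r : ZMod n) + (m : ZMod n))) := by
        apply Finset.sum_eq_single_of_mem k hkIcc
        intro j hj hjk
        rw [Finset.mem_Icc] at hj
        rcases lt_or_gt_of_ne hjk with hlt | hgt
        · -- j < k : the cell after the run of ones is itself 1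
          have hB0 : y (i + (j : ZMod n) + 1) + 1 = 0 := by
            have hpos : i + ((j : ℕ) : ZMod n) + 1 = i + (((j + 1 : ℕ)) : ZMod n) := by
              push_cast; ring
            rw [hpos, q1 (j + 1) (by omega), hyz (k - (j + 1)) (by omega),
              if_pos (by omega), one_add_one_zmod2]
          rw [hB0, mul_zero, zero_mul, zero_mul]
        · -- j > k : the product of ones hits the zero at e + 1
          have hC0 : (∏ m ∈ Finset.Icc 1 j, y (i + (m : ZMod n))) = 0 := by
            apply Finset.prod_eq_zero
              (Finset.mem_Icc.mpr (⟨by omega, by omega⟩ : 1 ≤ k + 1 ∧ k + 1 ≤ j))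
            rw [q2]
            exact hye1
          rw [hC0, mul_zero, zero_mul]
      have hA1 : y (i - (r : ZMod n) + (k : ZMod n)) + 1 = 1 := by
        rw [q3 k (by omega), show k + r - k = r by omega, hyer, zero_add]
      have hB1 : y (i + (k : ZMod n) + 1) + 1 = 1 := by
        rw [q4, hye1, zero_add]
      have hC1 : (∏ m ∈ Finset.Icc 1 k, y (i + (m : ZMod n))) = 1 := by
        apply Finset.prod_eq_one
        intro m hm
        rw [Finset.mem_Icc] at hm
        rw [q1 m hm.2, hyz (k - m) (by omega), if_pos (by omega)]
      rw [hS, hA1, hB1, hC1, one_mul, one_mul, one_mul]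
      have hcell : ∀ m, k + 1 ≤ m → m ≤ r →
          y (i - (r : ZMod n) + (m : ZMod n)) = if k + r - m < p then 1 else 0 := by
        intro m hm1 hm2
        rw [q3 m hm2]
        exact hyz (k + r - m) (by omega)
      rcases Nat.eq_or_lt_of_le hkp with hkp' | hklt
      · -- k = p : growth step, term fires
        have hpr' : p ≤ r - 1 := by omega
        have hD1 : (∏ m ∈ Finset.Icc (k + 1) r,
            (y (i - (r : ZMod n) + (m : ZMod n)) + 1)) = 1 := by
          apply Finset.prod_eq_one
          intro m hm
          rw [Finset.mem_Icc] at hm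
          rw [hcell m hm.1 hm.2, if_neg (by omega), zero_add]
        have hD2 : (∏ m ∈ Finset.Icc (k + 1) r, y (i - (r : ZMod n) + (m : ZMod n))) = 0 := by
          apply Finset.prod_eq_zero (Finset.mem_Icc.mpr ⟨by omega, le_rfl⟩)
          rw [hcell r (by omega) le_rfl, if_neg (by omega)]
        rw [hD1, hD2, add_zero, hLHS, hRHS, if_neg (by omega), zero_add,
          if_pos ?_]
        rw [hps, if_neg (by omega)]
        omega
      · rcases Nat.eq_or_lt_of_le hpr with hpr' | hplt
        · -- k < p = r : collapse step, term fires
          have hD1 : (∏ m ∈ Finset.Icc (k + 1) r,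
              (y (i - (r : ZMod n) + (m : ZMod n)) + 1)) = 0 := by
            apply Finset.prod_eq_zero (Finset.mem_Icc.mpr ⟨le_rfl, by omega⟩)
            rw [hcell (k + 1) le_rfl (by omega), if_pos (by omega), one_add_one_zmod2]
          have hD2 : (∏ m ∈ Finset.Icc (k + 1) r, y (i - (r : ZMod n) + (m : ZMod n))) = 1 := by
            apply Finset.prod_eq_one
            intro m hm
            rw [Finset.mem_Icc] at hm
            rw [hcell m hm.1 hm.2, if_pos (by omega)]
          rw [hD1, hD2, zero_add, hLHS, hRHS, if_pos (by omega), one_add_one_zmod2,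
            if_neg ?_]
          rw [hps, if_pos hpr']
          omega
        · -- k < p < r : nothing happens
          have hD1 : (∏ m ∈ Finset.Icc (k + 1) r,
              (y (i - (r : ZMod n) + (m : ZMod n)) + 1)) = 0 := by
            apply Finset.prod_eq_zero (Finset.mem_Icc.mpr ⟨by omega, le_rfl⟩)
            rw [hcell r (by omega) le_rfl, show k + r - r = k by omega,
              if_pos (by omega), one_add_one_zmod2]
          have hD2 : (∏ m ∈ Finset.Icc (k + 1) r, y (i - (r : ZMod n) + (m : ZMod n))) = 0 := by
            apply Finset.prod_eq_zero (Finset.mem_Icc.mpr ⟨le_rfl, by omega⟩)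
            rw [hcell (k + 1) le_rfl (by omega), if_neg (by omega)]
          rw [hD1, hD2, add_zero, add_zero, hLHS, hRHS, if_pos (by omega),
            if_pos ?_]
          rw [hps, if_neg (by omega)]
          omega

lemma step (hr : 2 ≤ r) (hn : 2 * r ≤ n) (t : ℕ) (i : ZMod n) :
    Conf r x t i + S r (Conf r x t) i = Conf r x (t + 1) i := by
  by_cases h : InZone r x i
  · obtain ⟨e, ℓ, k, hc, hk, rfl⟩ := h
    exact step_zone hr hn t hc hk
  · rw [step_frozen hr hn t h, add_zero, conf_frozen h, conf_frozen h]

lemma conf_zero (hr : 2 ≤ r) (hn : 2 * r ≤ n) : Conf r x 0 = x := by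
  funext i
  by_cases h : InZone r x i
  · obtain ⟨e, ℓ, k, hc, hk, rfl⟩ := h
    rw [conf_zone hr hn hc hk 0, phase_zero (by omega) hc.1 hc.2.1]
    by_cases hkl : k < ℓ
    · rw [if_pos hkl, hc.2.2.2.1 k hkl]
    · rw [if_neg hkl, hc.2.2.2.2 k (by omega) (by omega)]
  · exact conf_frozen h 0

lemma conf_r (hr : 2 ≤ r) (hn : 2 * r ≤ n) : Conf r x r = x := by
  funext i
  by_cases h : InZone r x i
  · obtain ⟨e, ℓ, k, hc, hk, rfl⟩ := h
    rw [conf_zone hr hn hc hk r, phase_r (by omega) hc.1 hc.2.1]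
    by_cases hkl : k < ℓ
    · rw [if_pos hkl, hc.2.2.2.1 k hkl]
    · rw [if_neg hkl, hc.2.2.2.2 k (by omega) (by omega)]
  · exact conf_frozen h r

end
end Stmt14

/-- for `r ≥ 2` and `n ≥ 2r`, the map `F : F_2^n → F_2^n` given by
`F(x)_i = x_i ⊕ Σ_{j=1}^{r-1} (x_{i-r+j} ⊕ 1)(x_{i+j+1} ⊕ 1)(∏_{m=1}^{j} x_{i+m})
(∏_{m=j+1}^{r} (x_{i-r+m} ⊕ 1) ⊕ ∏_{m=j+1}^{r} x_{i-r+m})` (indices mod `n`)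
satisfies `F^{(r)}(x) = x` for all `x`. -/
theorem stmt14 (r n : ℕ) (hr : 2 ≤ r) (hn : 2 * r ≤ n)
    (F : (ZMod n → ZMod 2) → ZMod n → ZMod 2)
    (hF : ∀ (x : ZMod n → ZMod 2) (i : ZMod n),
      F x i = x i + ∑ j ∈ Finset.Icc 1 (r - 1),
        (x (i - (r : ZMod n) + (j : ZMod n)) + 1) * (x (i + (j : ZMod n) + 1) + 1) *
          (∏ m ∈ Finset.Icc 1 j, x (i + (m : ZMod n))) *
          ((∏ m ∈ Finset.Icc (j + 1) r, (x (i - (r : ZMod n) + (m : ZMod n)) + 1)) +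
            ∏ m ∈ Finset.Icc (j + 1) r, x (i - (r : ZMod n) + (m : ZMod n)))) :
    ∀ x : ZMod n → ZMod 2, F^[r] x = x := by
  intro x
  have key : ∀ m : ℕ, F^[m] x = Stmt14.Conf r x m := by
    intro m
    induction m with
    | zero => rw [Function.iterate_zero_apply, Stmt14.conf_zero hr hn]
    | succ m ih =>
      rw [Function.iterate_succ_apply', ih]
      funext i
      rw [hF]
      exact Stmt14.step hr hn m i
  rw [key r, Stmt14.conf_r hr hn]
end

section
/- The Patt function f : F_2^4 → F_2 given by f(x) = x_2 ⊕ x_1 (x_3 ⊕ 1) x_4 is a proper lifting; moreover, for every n ≥ 4, the map F : F_2^n → F_2^n defined by F(x)_i = f(x_{i−1}, x_i, x_{i+1}, x_{i+2}) (indices modulo n) satisfies F(F(x)) = x for all x ∈ F_2^n. -/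
private lemma key : ∀ a b c d e g h : ZMod 2,
    (c + b * (d + 1) * e) +
      (b + a * (c + 1) * d) * ((d + c * (e + 1) * g) + 1) * (e + d * (g + 1) * h)
      = c := by decide

private lemma step (n : ℕ) (f : (Fin 4 → ZMod 2) → ZMod 2)
    (hf : ∀ x, f x = x 1 + x 0 * (x 2 + 1) * x 3) (x : ZMod n → ZMod 2) (i : ZMod n) :
    inducedShift 4 n 1 f x i = x i + x (i - 1) * (x (i + 1) + 1) * x (i + 2) := by
  simp only [inducedShift, hf, Fin.isValue,
    show ((0:Fin 4):ℕ) = 0 from rfl, show ((1:Fin 4):ℕ) = 1 from rfl,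
    show ((2:Fin 4):ℕ) = 2 from rfl, show ((3:Fin 4):ℕ) = 3 from rfl,
    Nat.cast_zero, Nat.cast_one, Nat.cast_ofNat, add_zero]
  rw [show i - 1 + 1 = i by ring, show i - 1 + 2 = i + 1 by ring,
    show i - 1 + 3 = i + 2 by ring]

private lemma invol (n : ℕ) (f : (Fin 4 → ZMod 2) → ZMod 2)
    (hf : ∀ x, f x = x 1 + x 0 * (x 2 + 1) * x 3) (x : ZMod n → ZMod 2) :
    inducedShift 4 n 1 f (inducedShift 4 n 1 f x) = x := by
  funext i
  rw [step n f hf, step n f hf, step n f hf, step n f hf, step n f hf,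
    show i - 1 - 1 = i - 2 by ring, show i - 1 + 1 = i by ring,
    show i - 1 + 2 = i + 1 by ring, show i + 1 - 1 = i by ring,
    show i + 1 + 1 = i + 2 by ring, show i + 1 + 2 = i + 3 by ring,
    show i + 2 - 1 = i + 1 by ring, show i + 2 + 1 = i + 3 by ring,
    show i + 2 + 2 = i + 4 by ring]
  exact key (x (i - 2)) (x (i - 1)) (x i) (x (i + 1)) (x (i + 2)) (x (i + 3)) (x (i + 4))

/-- the Patt function `f(x) = x_2 ⊕ x_1(x_3 ⊕ 1)x_4` is a proper
lifting; moreover for every `n ≥ 4` the map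
`F(x)_i = f(x_{i-1}, x_i, x_{i+1}, x_{i+2})` (indices mod `n`) is an involution. -/
theorem stmt15 (f : (Fin 4 → ZMod 2) → ZMod 2)
    (hf : ∀ x, f x = x 1 + x 0 * (x 2 + 1) * x 3) :
    (∀ n, 4 ≤ n → Function.Bijective (induced 4 n f)) ∧
      (∀ n, 4 ≤ n → ∀ x : ZMod n → ZMod 2,
        inducedShift 4 n 1 f (inducedShift 4 n 1 f x) = x) := by
  refine ⟨fun n hn => ?_, fun n hn x => invol n f hf x⟩
  have hG : Function.Bijective (inducedShift 4 n 1 f) :=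
    Function.Involutive.bijective (fun x => invol n f hf x)
  have hcomp : induced 4 n f = (fun y (i : ZMod n) => y (i + 1)) ∘ inducedShift 4 n 1 f := by
    funext x i
    simp only [Function.comp, inducedShift, induced, Nat.cast_one]
    congr 1
    funext m
    congr 1
    ring
  rw [hcomp]
  exact Function.Bijective.comp
    ⟨fun a b hab => by
        funext i
        have := congrFun hab (i - 1)
        simpa using this,
      fun y => ⟨fun i => y (i - 1), by funext i; simp⟩⟩
    hG
end

section
/- Let f : F_2^4 → F_2 be given by f(x) = x_2 ⊕ x_1 (x_3 ⊕ 1) x_4 and g : F_2^5 → F_2 by g(x) = x_2 ⊕ x_1 (x_3 ⊕ 1)(x_4 ⊕ 1) x_5. Then for all (x_1, …, x_8) ∈ F_2^8: g(f(x_1, x_2, x_3, x_4), f(x_2, x_3, x_4, x_5), f(x_3, x_4, x_5, x_6), f(x_4, x_5, x_6, x_7), f(x_5, x_6, x_7, x_8)) = x_3 ⊕ x_2 (x_5 (x_4 ⊕ 1) ⊕ (x_5 ⊕ 1) x_6 (x_3 ⊕ x_4 ⊕ 1)); in particular this composition is independent of x_1, x_7 and x_8, and (after the shift x_i ← x_{i+1})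 the composed local rule g ∘ f equals x_2 ⊕ x_1 (x_4 (x_3 ⊕ 1) ⊕ (x_4 ⊕ 1) x_5 (x_2 ⊕ x_3 ⊕ 1)), a Boolean function of diameter 5. -/
lemma zmod2_cases_s16 : ∀ a : ZMod 2, a = 0 ∨ a = 1 := by decide

/-- with `f(x) = x_2 ⊕ x_1(x_3 ⊕ 1)x_4` and
`g(x) = x_2 ⊕ x_1(x_3 ⊕ 1)(x_4 ⊕ 1)x_5`, the composition
`g(f(x_1,…,x_4), …, f(x_5,…,x_8))` equals
`x_3 ⊕ x_2(x_5(x_4 ⊕ 1) ⊕ (x_5 ⊕ 1)x_6(x_3 ⊕ x_4 ⊕ 1))`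
(in particular it is independent of `x_1, x_7, x_8`), it equals `h(x_2,…,x_6)` where
`h = g ∘ f` is the shifted local rule
`h(x) = x_2 ⊕ x_1(x_4(x_3 ⊕ 1) ⊕ (x_4 ⊕ 1)x_5(x_2 ⊕ x_3 ⊕ 1))`, and `h` has
diameter 5 (it depends on both its first and its fifth variable). -/
theorem stmt16 (f : (Fin 4 → ZMod 2) → ZMod 2) (g : (Fin 5 → ZMod 2) → ZMod 2)
    (h : (Fin 5 → ZMod 2) → ZMod 2)
    (hf : ∀ x, f x = x 1 + x 0 * (x 2 + 1) * x 3)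
    (hg : ∀ x, g x = x 1 + x 0 * (x 2 + 1) * (x 3 + 1) * x 4)
    (hh : ∀ x, h x = x 1 + x 0 * (x 3 * (x 2 + 1) + (x 3 + 1) * x 4 * (x 1 + x 2 + 1))) :
    (∀ x : Fin 8 → ZMod 2,
      g ![f ![x 0, x 1, x 2, x 3], f ![x 1, x 2, x 3, x 4], f ![x 2, x 3, x 4, x 5],
          f ![x 3, x 4, x 5, x 6], f ![x 4, x 5, x 6, x 7]] =
        x 2 + x 1 * (x 4 * (x 3 + 1) + (x 4 + 1) * x 5 * (x 2 + x 3 + 1))) ∧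
    (∀ x : Fin 8 → ZMod 2,
      g ![f ![x 0, x 1, x 2, x 3], f ![x 1, x 2, x 3, x 4], f ![x 2, x 3, x 4, x 5],
          f ![x 3, x 4, x 5, x 6], f ![x 4, x 5, x 6, x 7]] =
        h ![x 1, x 2, x 3, x 4, x 5]) ∧
    BoolDependsOn h 0 ∧ BoolDependsOn h 4 := by
  have key : ∀ x : Fin 8 → ZMod 2,
      g ![f ![x 0, x 1, x 2, x 3], f ![x 1, x 2, x 3, x 4], f ![x 2, x 3, x 4, x 5],
          f ![x 3, x 4, x 5, x 6], f ![x 4, x 5, x 6, x 7]] =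
        x 2 + x 1 * (x 4 * (x 3 + 1) + (x 4 + 1) * x 5 * (x 2 + x 3 + 1)) := by
    intro x
    simp only [hg, hf, Matrix.cons_val_zero, Matrix.cons_val_one, Matrix.head_cons,
      Matrix.cons_val_two, Matrix.tail_cons, Matrix.cons_val_three, Matrix.cons_val_four,
      Matrix.cons_val_fin_one]
    generalize x 0 = a0
    generalize x 7 = a7
    generalize x 1 = a
    generalize x 2 = b
    generalize x 3 = c
    generalize x 4 = d
    generalize x 5 = e
    generalize x 6 = i
    revert a0 a7 a b c d e i
    decide
  refine ⟨key, ?_, ?_, ?_⟩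
  · intro x
    rw [key x, hh]
    simp
  · refine ⟨![0, 0, 0, 1, 0], ![1, 0, 0, 1, 0], ?_, ?_⟩
    · intro j hj; fin_cases j <;> simp_all
    · simp [hh]
  · refine ⟨![1, 0, 0, 0, 0], ![1, 0, 0, 0, 1], ?_, ?_⟩
    · intro j hj; fin_cases j <;> simp_all
    · simp [hh]
end

section
/- Let h : F_2^5 → F_2 be given by h(x) = x_2 ⊕ x_1 (x_4 (x_3 ⊕ 1) ⊕ (x_4 ⊕ 1) x_5 (x_2 ⊕ x_3 ⊕ 1)) (the composition (1★001) ∘ (1★01)). Then for every j ∈ {1, 2, 3, 4, 5}, the function h(x) ⊕ x_j depends on x_j; that is, there exist x, x' ∈ F_2^5 differing only in coordinate j such that h(x) ⊕ x_j ≠ h(x') ⊕ x'_j. -/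
/-- for
`h(x) = x_2 ⊕ x_1(x_4(x_3 ⊕ 1) ⊕ (x_4 ⊕ 1)x_5(x_2 ⊕ x_3 ⊕ 1))`
(the composition `(1★001) ∘ (1★01)`), for every coordinate `j` the function
`h(x) ⊕ x_j` depends on `x_j`: there are inputs differing only in coordinate `j`
on which `h(x) ⊕ x_j` takes different values. -/
theorem stmt18 (h : (Fin 5 → ZMod 2) → ZMod 2)
    (hh : ∀ x, h x = x 1 + x 0 * (x 3 * (x 2 + 1) + (x 3 + 1) * x 4 * (x 1 + x 2 + 1))) :
    ∀ j : Fin 5, ∃ x x' : Fin 5 → ZMod 2,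
      (∀ m, m ≠ j → x m = x' m) ∧ h x + x j ≠ h x' + x' j := by
  intro j
  fin_cases j
  · exact ⟨![0,0,0,0,0], ![1,0,0,0,0], by decide, by rw [hh, hh]; decide⟩
  · exact ⟨![1,0,0,0,1], ![1,1,0,0,1], by decide, by rw [hh, hh]; decide⟩
  · exact ⟨![0,0,0,0,0], ![0,0,1,0,0], by decide, by rw [hh, hh]; decide⟩
  · exact ⟨![0,0,0,0,0], ![0,0,0,1,0], by decide, by rw [hh, hh]; decide⟩
  · exact ⟨![0,0,0,0,0], ![0,0,0,0,1], by decide, by rw [hh, hh]; decide⟩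
end
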